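/- arXiv:1312.4778 — 4 statements merged into one kernel-verified Lean document; each statement's English description precedes it below -/
import Mathlib

section
/- Let n ≥ 3, 0 < ε < 1, and r ≥ ((n−2)/(n+2))^((n−2)/(2n)). Then the equation (z^n − ε r^n)/(z(z^n − r^n)) = conj(z) has exactly 3n complex solutions. -/
open Set

private noncomputable def sm (m : ℕ) : ℝ := Real.sqrt (((m:ℝ)+1)/((m:ℝ)+5))

private lemma sm_pos (m : ℕ) : 0 < sm m := Real.sqrt_pos.mpr (by positivity)

private lemma sm_sq (m : ℕ) : (sm m)^2 = ((m:ℝ)+1)/((m:ℝ)+5) := Real.sq_sqrt (by positivity)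

private lemma phi_deriv (m : ℕ) (a x : ℝ) :
    HasDerivAt (fun x : ℝ => ((m:ℝ)+5)*x^(m+3) - ((m:ℝ)+3)*x^(m+1) - 2*a)
      (((m:ℝ)+3)*x^m*(((m:ℝ)+5)*x^2 - ((m:ℝ)+1))) x := by
  have h := (((hasDerivAt_pow (m+3) x).const_mul ((m:ℝ)+5)).sub
    ((hasDerivAt_pow (m+1) x).const_mul ((m:ℝ)+3))).sub_const (2*a)
  refine h.congr_deriv ?_
  have h1 : m + 3 - 1 = m + 2 := rfl
  have h2 : m + 1 - 1 = m := rfl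
  rw [h1, h2]
  push_cast
  ring

private lemma phi_anti (m : ℕ) (a : ℝ) :
    StrictAntiOn (fun x : ℝ => ((m:ℝ)+5)*x^(m+3) - ((m:ℝ)+3)*x^(m+1) - 2*a)
      (Icc 0 (sm m)) := by
  apply StrictAntiOn.mono (s := Icc 0 (sm m)) ?_ le_rfl
  apply strictAntiOn_of_deriv_neg (convex_Icc _ _)
  · exact (Continuous.continuousOn (by continuity))
  · intro x hx
    rw [interior_Icc] at hx
    rw [(phi_deriv m a x).deriv]
    have hx2 : x^2 < ((m:ℝ)+1)/((m:ℝ)+5) := by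
      rw [← sm_sq m]
      exact pow_lt_pow_left₀ hx.2 hx.1.le (by norm_num)
    have : ((m:ℝ)+5)*x^2 - ((m:ℝ)+1) < 0 := by
      have h5 : (0:ℝ) < (m:ℝ)+5 := by positivity
      rw [lt_div_iff₀ h5] at hx2
      nlinarith
    have hxm : (0:ℝ) < ((m:ℝ)+3)*x^m :=
      mul_pos (by positivity) (pow_pos hx.1 m)
    exact mul_neg_of_pos_of_neg hxm this

private lemma phi_mono (m : ℕ) (a : ℝ) :
    StrictMonoOn (fun x : ℝ => ((m:ℝ)+5)*x^(m+3) - ((m:ℝ)+3)*x^(m+1) - 2*a)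
      (Ici (sm m)) := by
  apply strictMonoOn_of_deriv_pos (convex_Ici _)
  · exact (Continuous.continuousOn (by continuity))
  · intro x hx
    rw [interior_Ici] at hx
    rw [(phi_deriv m a x).deriv]
    have hs := sm_pos m
    have hx0 : 0 < x := hs.trans hx
    have hx2 : ((m:ℝ)+1)/((m:ℝ)+5) < x^2 := by
      rw [← sm_sq m]
      exact pow_lt_pow_left₀ hx hs.le (by norm_num)
    have : 0 < ((m:ℝ)+5)*x^2 - ((m:ℝ)+1) := by
      have h5 : (0:ℝ) < (m:ℝ)+5 := by positivity
      rw [div_lt_iff₀ h5] at hx2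
      nlinarith
    exact mul_pos (mul_pos (by positivity) (pow_pos hx0 m)) this

private lemma phi_cont (m : ℕ) (a : ℝ) :
    Continuous (fun x : ℝ => ((m:ℝ)+5)*x^(m+3) - ((m:ℝ)+3)*x^(m+1) - 2*a) := by
  continuity

private lemma P_cont (m : ℕ) (a ε : ℝ) :
    Continuous (fun x : ℝ => x^(m+5) - x^(m+3) - a*x^2 + ε*a) := by
  continuity

private lemma P_deriv (m : ℕ) (a ε x : ℝ) :
    HasDerivAt (fun x : ℝ => x^(m+5) - x^(m+3) - a*x^2 + ε*a)
      (x * (((m:ℝ)+5)*x^(m+3) - ((m:ℝ)+3)*x^(m+1) - 2*a)) x := by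
  have h := (((hasDerivAt_pow (m+5) x).sub (hasDerivAt_pow (m+3) x)).sub
    ((hasDerivAt_pow 2 x).const_mul a)).add_const (ε*a)
  refine h.congr_deriv ?_
  have h1 : m + 5 - 1 = m + 4 := rfl
  have h2 : m + 3 - 1 = m + 2 := rfl
  rw [h1, h2]
  push_cast
  ring

private lemma P_roots (m : ℕ) (a ε : ℝ) (ha : 0 < a) (hε0 : 0 < ε) (hε1 : ε < 1) :
    ∃ ρ₁ ρ₂ : ℝ, 0 < ρ₁ ∧ ρ₁ < ρ₂ ∧
      ρ₁^(m+5) - ρ₁^(m+3) - a*ρ₁^2 + ε*a = 0 ∧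
      ρ₂^(m+5) - ρ₂^(m+3) - a*ρ₂^2 + ε*a = 0 ∧
      ∀ x : ℝ, 0 < x → x^(m+5) - x^(m+3) - a*x^2 + ε*a = 0 → x = ρ₁ ∨ x = ρ₂ := by
  set s := sm m with hs
  set φ := fun x : ℝ => ((m:ℝ)+5)*x^(m+3) - ((m:ℝ)+3)*x^(m+1) - 2*a with hφ
  set P := fun x : ℝ => x^(m+5) - x^(m+3) - a*x^2 + ε*a with hP
  have hs0 : 0 < s := sm_pos m
  have hanti : StrictAntiOn φ (Set.Icc 0 s) := phi_anti m a
  have hmon : StrictMonoOn φ (Set.Ici s) := phi_mono m a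
  have hφc : Continuous φ := phi_cont m a
  have hPc : Continuous P := P_cont m a ε
  have hφ0 : φ 0 = -(2*a) := by simp [hφ]
  have hφs : φ s < 0 := by
    have h1 : ((m:ℝ)+5)*s^2 = (m:ℝ)+1 := by
      rw [hs, sm_sq]; field_simp
    have h2 : s^(m+3) = s^(m+1)*s^2 := by ring
    have h3 : 0 < s^(m+1) := pow_pos hs0 _
    show ((m:ℝ)+5)*s^(m+3) - ((m:ℝ)+3)*s^(m+1) - 2*a < 0
    nlinarith
  -- large point for φ
  set X₁ := max (s+1) (a+1) with hX₁
  have hX₁1 : 1 ≤ X₁ := le_trans (by linarith) (le_max_left _ _)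
  have hX₁a : a + 1 ≤ X₁ := le_max_right _ _
  have hX₁s : s < X₁ := lt_of_lt_of_le (by linarith) (le_max_left _ _)
  have hφX₁ : 0 < φ X₁ := by
    have h1 : X₁^(m+1) ≤ X₁^(m+3) := pow_le_pow_right₀ hX₁1 (by omega)
    have h2 : X₁ ≤ X₁^(m+3) := le_self_pow₀ hX₁1 (by omega)
    show 0 < ((m:ℝ)+5)*X₁^(m+3) - ((m:ℝ)+3)*X₁^(m+1) - 2*a
    nlinarith
  -- root of φ
  obtain ⟨x₀, hx₀mem, hx₀⟩ : ∃ x₀ ∈ Set.Ioo s X₁, φ x₀ = 0 := by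
    obtain ⟨x₀, h1, h2⟩ := intermediate_value_Ioo hX₁s.le hφc.continuousOn ⟨hφs, hφX₁⟩
    exact ⟨x₀, h1, h2⟩
  have hx₀s : s < x₀ := hx₀mem.1
  have hx₀0 : 0 < x₀ := hs0.trans hx₀s
  -- sign of φ
  have hφneg : ∀ x : ℝ, 0 < x → x < x₀ → φ x < 0 := by
    intro x hx hxx
    rcases le_total x s with h | h
    · have := hanti (Set.left_mem_Icc.mpr hs0.le) ⟨hx.le, h⟩ hx
      rw [hφ0] at this
      linarith
    · have := hmon h (le_of_lt (lt_of_le_of_lt h hxx)) hxx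
      rw [hx₀] at this
      exact this
  have hφpos : ∀ x : ℝ, x₀ < x → 0 < φ x := by
    intro x hx
    have := hmon hx₀s.le (hx₀s.le.trans hx.le) hx
    rw [hx₀] at this
    exact this
  -- monotonicity of P
  have hPanti : StrictAntiOn P (Set.Icc 0 x₀) := by
    apply strictAntiOn_of_deriv_neg (convex_Icc _ _) hPc.continuousOn
    intro x hx
    rw [interior_Icc] at hx
    rw [hP, (P_deriv m a ε x).deriv]
    exact mul_neg_of_pos_of_neg hx.1 (hφneg x hx.1 hx.2)
  have hPmono : StrictMonoOn P (Set.Ici x₀) := by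
    apply strictMonoOn_of_deriv_pos (convex_Ici _) hPc.continuousOn
    intro x hx
    rw [interior_Ici] at hx
    rw [hP, (P_deriv m a ε x).deriv]
    exact mul_pos (hx₀0.trans hx) (hφpos x hx)
  -- values of P
  have hP0 : 0 < P 0 := by
    show 0 < (0:ℝ)^(m+5) - (0:ℝ)^(m+3) - a*(0:ℝ)^2 + ε*a
    norm_num
    positivity
  have hPu : P (Real.sqrt ε) < 0 := by
    set u := Real.sqrt ε with hu
    have hu0 : 0 < u := Real.sqrt_pos.mpr hε0
    have hu2 : u^2 = ε := Real.sq_sqrt hε0.le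
    have h2 : u^(m+5) = u^(m+3)*u^2 := by ring
    have h3 : 0 < u^(m+3) := pow_pos hu0 _
    show u^(m+5) - u^(m+3) - a*u^2 + ε*a < 0
    nlinarith
  have hPx₀ : P x₀ < 0 := by
    rcases le_total (Real.sqrt ε) x₀ with h | h
    · have := hPanti.antitoneOn (Set.mem_Icc.mpr ⟨Real.sqrt_nonneg _, h⟩)
        (Set.mem_Icc.mpr ⟨hx₀0.le, le_rfl⟩) h
      linarith
    · have := hPmono.monotoneOn (Set.self_mem_Ici) (Set.mem_Ici.mpr h) h
      linarith
  -- first root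
  obtain ⟨ρ₁, hρ₁mem, hρ₁⟩ : ∃ ρ₁ ∈ Set.Ioo (0:ℝ) x₀, P ρ₁ = 0 := by
    obtain ⟨ρ, h1, h2⟩ := intermediate_value_Ioo' hx₀0.le hPc.continuousOn ⟨hPx₀, hP0⟩
    exact ⟨ρ, h1, h2⟩
  -- large point for P
  set X₂ := max x₀ (Real.sqrt (a+1)) with hX₂
  have hra : (1:ℝ) ≤ Real.sqrt (a+1) := by
    nlinarith [Real.sq_sqrt (show (0:ℝ) ≤ a+1 by linarith), Real.sqrt_nonneg (a+1)]
  have hX₂1 : 1 ≤ X₂ := le_trans hra (le_max_right _ _)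
  have hX₂x₀ : x₀ ≤ X₂ := le_max_left _ _
  have hX₂sq : a + 1 ≤ X₂^2 := by
    have h1 : Real.sqrt (a+1) ≤ X₂ := le_max_right _ _
    have h2 : (Real.sqrt (a+1))^2 = a+1 := Real.sq_sqrt (by linarith)
    nlinarith [Real.sqrt_nonneg (a+1)]
  have hPX₂ : 0 < P X₂ := by
    have h1 : X₂^2 ≤ X₂^(m+3) := pow_le_pow_right₀ hX₂1 (by omega)
    have h2 : X₂^(m+5) = X₂^(m+3)*X₂^2 := by ring
    have h3 : (0:ℝ) < X₂^2 := by nlinarith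
    show 0 < X₂^(m+5) - X₂^(m+3) - a*X₂^2 + ε*a
    nlinarith
  have hx₀X₂ : x₀ < X₂ := by
    rcases lt_or_eq_of_le hX₂x₀ with h | h
    · exact h
    · exfalso; rw [← h] at hPX₂; linarith
  -- second root
  obtain ⟨ρ₂, hρ₂mem, hρ₂⟩ : ∃ ρ₂ ∈ Set.Ioo x₀ X₂, P ρ₂ = 0 := by
    obtain ⟨ρ, h1, h2⟩ := intermediate_value_Ioo hx₀X₂.le hPc.continuousOn ⟨hPx₀, hPX₂⟩
    exact ⟨ρ, h1, h2⟩
  refine ⟨ρ₁, ρ₂, hρ₁mem.1, hρ₁mem.2.trans hρ₂mem.1, hρ₁, hρ₂, ?_⟩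
  intro x hx hPx
  rcases le_total x x₀ with h | h
  · left
    exact hPanti.injOn (Set.mem_Icc.mpr ⟨hx.le, h⟩)
      (Set.mem_Icc.mpr ⟨hρ₁mem.1.le, hρ₁mem.2.le⟩) (by rw [hρ₁]; exact hPx)
  · right
    exact hPmono.injOn (Set.mem_Ici.mpr h)
      (Set.mem_Ici.mpr hρ₂mem.1.le) (by rw [hρ₂]; exact hPx)

private lemma Q_cont (m : ℕ) (a ε : ℝ) :
    Continuous (fun x : ℝ => x^(m+5) - x^(m+3) + a*x^2 - ε*a) := by
  continuity

private lemma Q_deriv (m : ℕ) (a ε x : ℝ) :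
    HasDerivAt (fun x : ℝ => x^(m+5) - x^(m+3) + a*x^2 - ε*a)
      (x * (((m:ℝ)+5)*x^(m+3) - ((m:ℝ)+3)*x^(m+1) - 2*(-a))) x := by
  have h := (((hasDerivAt_pow (m+5) x).sub (hasDerivAt_pow (m+3) x)).add
    ((hasDerivAt_pow 2 x).const_mul a)).sub_const (ε*a)
  refine h.congr_deriv ?_
  have h1 : m + 5 - 1 = m + 4 := rfl
  have h2 : m + 3 - 1 = m + 2 := rfl
  rw [h1, h2]
  push_cast
  ring

private lemma Q_root (m : ℕ) (a ε : ℝ) (ha : 0 < a) (hε0 : 0 < ε) (hε1 : ε < 1)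
    (has : (sm m)^(m+1) ≤ a) :
    ∃ ρ₃ : ℝ, 0 < ρ₃ ∧
      ρ₃^(m+5) - ρ₃^(m+3) + a*ρ₃^2 - ε*a = 0 ∧
      ∀ x : ℝ, 0 < x → x^(m+5) - x^(m+3) + a*x^2 - ε*a = 0 → x = ρ₃ := by
  set s := sm m with hs
  set ψ := fun x : ℝ => ((m:ℝ)+5)*x^(m+3) - ((m:ℝ)+3)*x^(m+1) - 2*(-a) with hψ
  set Q := fun x : ℝ => x^(m+5) - x^(m+3) + a*x^2 - ε*a with hQ
  have hs0 : 0 < s := sm_pos m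
  have hanti : StrictAntiOn ψ (Set.Icc 0 s) := phi_anti m (-a)
  have hmon : StrictMonoOn ψ (Set.Ici s) := phi_mono m (-a)
  have hQc : Continuous Q := Q_cont m a ε
  have hψs : 0 ≤ ψ s := by
    have h1 : ((m:ℝ)+5)*s^2 = (m:ℝ)+1 := by
      rw [hs, sm_sq]; field_simp
    have h2 : s^(m+3) = s^(m+1)*s^2 := by ring
    show 0 ≤ ((m:ℝ)+5)*s^(m+3) - ((m:ℝ)+3)*s^(m+1) - 2*(-a)
    have h4 : (sm m)^(m+1) = s^(m+1) := by rw [hs]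
    nlinarith [has, h4 ▸ has]
  -- ψ positive away from s
  have hψpos : ∀ x : ℝ, 0 < x → x ≠ s → 0 < ψ x := by
    intro x hx hxs
    rcases lt_or_gt_of_ne hxs with h | h
    · have := hanti ⟨hx.le, h.le⟩ (Set.right_mem_Icc.mpr hs0.le) h
      linarith
    · have := hmon (Set.self_mem_Ici) (Set.mem_Ici.mpr h.le) h
      linarith
  -- Q strictly monotone on [0, s] and [s, ∞)
  have hQ1 : StrictMonoOn Q (Set.Icc 0 s) := by
    apply strictMonoOn_of_deriv_pos (convex_Icc _ _) hQc.continuousOn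
    intro x hx
    rw [interior_Icc] at hx
    rw [hQ, (Q_deriv m a ε x).deriv]
    exact mul_pos hx.1 (hψpos x hx.1 hx.2.ne)
  have hQ2 : StrictMonoOn Q (Set.Ici s) := by
    apply strictMonoOn_of_deriv_pos (convex_Ici _) hQc.continuousOn
    intro x hx
    rw [interior_Ici] at hx
    rw [hQ, (Q_deriv m a ε x).deriv]
    exact mul_pos (hs0.trans hx) (hψpos x (hs0.trans hx) (ne_of_gt hx))
  -- glue
  have hQmono : StrictMonoOn Q (Set.Ici (0:ℝ)) := by
    intro x hx y hy hxy
    simp only [Set.mem_Ici] at hx hy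
    rcases le_total y s with h | h
    · exact hQ1 ⟨hx, hxy.le.trans h⟩ ⟨hy, h⟩ hxy
    · rcases le_total s x with h' | h'
      · exact hQ2 h' h hxy
      · have h1 : Q x ≤ Q s := hQ1.monotoneOn ⟨hx, h'⟩ (Set.right_mem_Icc.mpr hs0.le) h'
        have h2 : Q s ≤ Q y := hQ2.monotoneOn Set.self_mem_Ici h h
        rcases lt_or_eq_of_le h' with h'' | h''
        · exact lt_of_lt_of_le (hQ1 ⟨hx, h'⟩ (Set.right_mem_Icc.mpr hs0.le) h'') h2
        · have hsy : s < y := by rw [← h'']; exact hxy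
          exact lt_of_le_of_lt h1 (hQ2 Set.self_mem_Ici hsy.le hsy)
  -- values
  have hQ0 : Q 0 < 0 := by
    show (0:ℝ)^(m+5) - (0:ℝ)^(m+3) + a*(0:ℝ)^2 - ε*a < 0
    norm_num
    positivity
  set X₃ := Real.sqrt (1+ε) with hX₃
  have hX₃0 : 0 < X₃ := Real.sqrt_pos.mpr (by linarith)
  have hX₃2 : X₃^2 = 1+ε := Real.sq_sqrt (by linarith)
  have hQX₃ : 0 < Q X₃ := by
    have h2 : X₃^(m+5) = X₃^(m+3)*X₃^2 := by ring
    have h3 : 0 < X₃^(m+3) := pow_pos hX₃0 _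
    show 0 < X₃^(m+5) - X₃^(m+3) + a*X₃^2 - ε*a
    nlinarith
  obtain ⟨ρ₃, hρ₃mem, hρ₃⟩ : ∃ ρ₃ ∈ Set.Ioo (0:ℝ) X₃, Q ρ₃ = 0 := by
    obtain ⟨ρ, h1, h2⟩ := intermediate_value_Ioo hX₃0.le hQc.continuousOn ⟨hQ0, hQX₃⟩
    exact ⟨ρ, h1, h2⟩
  refine ⟨ρ₃, hρ₃mem.1, hρ₃, ?_⟩
  intro x hx hQx
  exact hQmono.injOn (Set.mem_Ici.mpr hx.le) (Set.mem_Ici.mpr hρ₃mem.1.le)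
    (by rw [hρ₃]; exact hQx)
open Polynomial
lemma card_pow_eq (n : ℕ) (hn : n ≠ 0) (c : ℂ) (hc : c ≠ 0) :
    {z : ℂ | z ^ n = c}.ncard = n ∧ {z : ℂ | z ^ n = c}.Finite := by
  have hζ := Complex.isPrimitiveRoot_exp n hn
  have hset : {z : ℂ | z ^ n = c} = ↑(nthRoots n c).toFinset := by
    ext z
    simp [Polynomial.mem_nthRoots (Nat.pos_of_ne_zero hn)]
  constructor
  · rw [hset, Set.ncard_coe_finset, Multiset.toFinset_card_of_nodup (hζ.nthRoots_nodup hc),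
      hζ.card_nthRoots, if_pos]
    obtain ⟨α, hα⟩ := (IsAlgClosed.exists_pow_nat_eq c (Nat.pos_of_ne_zero hn) : ∃ z : ℂ, z ^ n = c)
    exact ⟨α, hα⟩
  · rw [hset]; exact (nthRoots n c).toFinset.finite_toSet

/-- For `n ≥ 3`, `0 < ε < 1` and `r ≥ ((n−2)/(n+2))^((n−2)/(2n))`, the equation
`(z^n − εr^n)/(z(z^n − r^n)) = conj z` has exactly `3n` solutions. -/
theorem stmt_13 (n : ℕ) (hn : 3 ≤ n) (ε r : ℝ) (hε0 : 0 < ε) (hε1 : ε < 1)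
    (hr : r ≥ (((n : ℝ) - 2) / ((n : ℝ) + 2)) ^ ((((n : ℝ) - 2)) / (2 * (n : ℝ)))) :
    {z : ℂ | z ≠ 0 ∧ z ^ n ≠ (r : ℂ) ^ n ∧
      (z ^ n - (ε : ℂ) * (r : ℂ) ^ n) / (z * (z ^ n - (r : ℂ) ^ n)) =
        (starRingEnd ℂ) z}.ncard = 3 * n := by
  obtain ⟨m, rfl⟩ : ∃ m, n = m + 3 := ⟨n - 3, by omega⟩
  have hm : (0:ℝ) ≤ m := Nat.cast_nonneg m
  have hB0 : (0:ℝ) < (((m+3:ℕ):ℝ)-2)/(((m+3:ℕ):ℝ)+2) := by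
    push_cast; apply div_pos <;> linarith
  have hr0 : 0 < r := lt_of_lt_of_le (Real.rpow_pos_of_pos hB0 _) hr
  have ha : 0 < r^(m+3) := pow_pos hr0 _
  set a := r^(m+3) with haa
  have hrc : ((r:ℝ):ℂ)^(m+3) = ((a:ℝ):ℂ) := by rw [haa]; push_cast; ring
  have has : (sm m)^(m+1) ≤ a := by
    set B := ((((m+3:ℕ):ℝ)-2)/(((m+3:ℕ):ℝ)+2)) ^ (((((m+3:ℕ):ℝ))-2)/(2*(((m+3:ℕ):ℝ)))) with hB
    have hle : B ^ (m+3) ≤ r ^ (m+3) :=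
      pow_le_pow_left₀ (Real.rpow_nonneg hB0.le _) hr _
    have heq : (sm m)^(m+1) = B ^ (m+3) := by
      rw [hB, ← Real.rpow_natCast (_ ^ _) (m+3), ← Real.rpow_mul hB0.le]
      rw [sm, Real.sqrt_eq_rpow, ← Real.rpow_natCast (_ ^ (1/2:ℝ)) (m+1),
        ← Real.rpow_mul (by positivity)]
      have hbase : (((m+3:ℕ):ℝ)-2)/(((m+3:ℕ):ℝ)+2) = ((m:ℝ)+1)/((m:ℝ)+5) := by
        push_cast; ring_nf
      rw [hbase]
      congr 1
      push_cast
      have : (m:ℝ) + 3 ≠ 0 := by linarith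
      field_simp
      ring
    rw [heq]; exact hle
  obtain ⟨ρ₁, ρ₂, hρ₁0, hρ₁₂, hP1, hP2, hPuniq⟩ := P_roots m a ε ha hε0 hε1
  obtain ⟨ρ₃, hρ₃0, hQ3, hQuniq⟩ := Q_root m a ε ha hε0 hε1 has
  have hρ₂0 : 0 < ρ₂ := hρ₁0.trans hρ₁₂
  -- the three target values
  have id1 : ρ₁^(m+3)*(ρ₁^2-1) = a*(ρ₁^2-ε) := by linear_combination hP1
  have id2 : ρ₂^(m+3)*(ρ₂^2-1) = a*(ρ₂^2-ε) := by linear_combination hP2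
  have id3 : (-(ρ₃^(m+3)))*(ρ₃^2-1) = a*(ρ₃^2-ε) := by linear_combination -hQ3
  have hta1 : ρ₁^(m+3) ≠ a := by
    intro h
    have h2 : a * (ε - 1) = 0 := by linear_combination id1 - (ρ₁^2-1)*h
    rcases mul_eq_zero.mp h2 with h3 | h3
    · exact ha.ne' h3
    · linarith
  have hta2 : ρ₂^(m+3) ≠ a := by
    intro h
    have h2 : a * (ε - 1) = 0 := by linear_combination id2 - (ρ₂^2-1)*h
    rcases mul_eq_zero.mp h2 with h3 | h3
    · exact ha.ne' h3
    · linarith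
  have hta3 : -(ρ₃^(m+3)) ≠ a := by
    have : 0 < ρ₃^(m+3) := pow_pos hρ₃0 _
    intro h; nlinarith
  -- the key backward lemma
  have key : ∀ (t ρ : ℝ), 0 < ρ → |t| = ρ^(m+3) → t*(ρ^2-1) = a*(ρ^2-ε) → t ≠ a →
      ∀ z : ℂ, z^(m+3) = (t:ℂ) →
        z ≠ 0 ∧ z^(m+3) ≠ ((r:ℝ):ℂ)^(m+3) ∧
        (z^(m+3) - ((ε:ℝ):ℂ)*((r:ℝ):ℂ)^(m+3)) / (z*(z^(m+3) - ((r:ℝ):ℂ)^(m+3))) =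
          (starRingEnd ℂ) z := by
    intro t ρ hρ habs hid hta z hz
    have ht0 : t ≠ 0 := by
      intro h; rw [h, abs_zero] at habs
      exact (pow_pos hρ _).ne' habs.symm
    have hz0 : z ≠ 0 := by
      intro h
      rw [h, zero_pow (by omega : m+3 ≠ 0)] at hz
      exact ht0 (by exact_mod_cast hz.symm)
    have hzr : z^(m+3) ≠ ((r:ℝ):ℂ)^(m+3) := by
      rw [hz, hrc]
      exact_mod_cast hta
    refine ⟨hz0, hzr, ?_⟩
    have habsz : ‖z‖ = ρ := by
      have h1 : ‖z‖ ^ (m+3) = ρ^(m+3) := by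
        rw [← norm_pow, hz, Complex.norm_real, Real.norm_eq_abs, habs]
      exact (pow_left_strictMonoOn₀ (n := m+3) (by omega)).injOn
        (norm_nonneg z) hρ.le h1
    have hν : Complex.normSq z = ρ^2 := by rw [← Complex.sq_norm, habsz]
    rw [div_eq_iff (mul_ne_zero hz0 (sub_ne_zero.mpr hzr))]
    rw [hz, hrc]
    have hconj : (starRingEnd ℂ) z * z = ((ρ^2 : ℝ):ℂ) := by
      rw [mul_comm, Complex.mul_conj, hν]
    have h2 : (starRingEnd ℂ) z * (z * ((t:ℂ) - ((a:ℝ):ℂ))) =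
        ((ρ^2:ℝ):ℂ) * ((t:ℂ) - ((a:ℝ):ℂ)) := by
      rw [← mul_assoc, hconj]
    rw [h2]
    have hre : t - ε*a = ρ^2*(t-a) := by linear_combination -hid
    exact_mod_cast congrArg (Complex.ofReal) hre
  -- sets
  set S₁ := {z : ℂ | z^(m+3) = ((ρ₁^(m+3):ℝ):ℂ)} with hS₁
  set S₂ := {z : ℂ | z^(m+3) = ((ρ₂^(m+3):ℝ):ℂ)} with hS₂
  set S₃ := {z : ℂ | z^(m+3) = ((-(ρ₃^(m+3)):ℝ):ℂ)} with hS₃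
  have hset : {z : ℂ | z ≠ 0 ∧ z ^ (m+3) ≠ (r : ℂ) ^ (m+3) ∧
      (z ^ (m+3) - (ε : ℂ) * (r : ℂ) ^ (m+3)) / (z * (z ^ (m+3) - (r : ℂ) ^ (m+3))) =
        (starRingEnd ℂ) z} = S₁ ∪ (S₂ ∪ S₃) := by
    ext z
    simp only [hS₁, hS₂, hS₃, Set.mem_setOf_eq, Set.mem_union]
    constructor
    · rintro ⟨hz0, hzr, heq⟩
      rw [div_eq_iff (mul_ne_zero hz0 (sub_ne_zero.mpr hzr))] at heq
      have e1 : (starRingEnd ℂ) z * (z * (z^(m+3) - ((r:ℝ):ℂ)^(m+3))) =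
          ((Complex.normSq z :ℝ):ℂ) * (z^(m+3) - ((r:ℝ):ℂ)^(m+3)) := by
        rw [← mul_assoc, mul_comm ((starRingEnd ℂ) z) z, Complex.mul_conj]
      rw [e1, hrc] at heq
      set ν := Complex.normSq z with hνdef
      have hν1 : ν ≠ 1 := by
        intro h
        rw [h] at heq
        have hA : ((a:ℝ):ℂ) ≠ 0 := by exact_mod_cast ha.ne'
        have h3 : ((ε:ℝ):ℂ) * ((a:ℝ):ℂ) = ((a:ℝ):ℂ) * 1 := by
          push_cast at heq ⊢
          linear_combination -heq
        have h4 : ε * a = a * 1 := by exact_mod_cast h3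
        nlinarith
      have hν1' : ν - 1 ≠ 0 := sub_ne_zero.mpr hν1
      set t := a*(ν-ε)/(ν-1) with ht
      have hid : t*(ν-1) = a*(ν-ε) := by
        rw [ht]; field_simp
      have hzt : z^(m+3) = (t:ℂ) := by
        rw [ht, Complex.ofReal_div]
        rw [eq_div_iff (show ((ν - 1:ℝ):ℂ) ≠ 0 by exact_mod_cast hν1')]
        push_cast
        linear_combination -heq
      have habs : ‖z‖ ^(m+3) = |t| := by
        rw [← norm_pow, hzt, Complex.norm_real, Real.norm_eq_abs]
      set ρ := ‖z‖ with hρdef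
      have hρ0 : 0 < ρ := norm_pos_iff.mpr hz0
      have hν2 : ν = ρ^2 := (Complex.sq_norm z).symm
      rw [hν2] at hid
      have ht0 : t ≠ 0 := by
        intro h
        rw [h, abs_zero] at habs
        exact (pow_pos hρ0 _).ne' habs
      rcases ht0.lt_or_gt with hneg | hpos
      · have h1 : ρ^(m+3) = -t := by rw [abs_of_neg hneg] at habs; linarith
        have hQρ : ρ^(m+5) - ρ^(m+3) + a*ρ^2 - ε*a = 0 := by
          linear_combination (ρ^2-1)*h1 - hid
        have hρ3 : ρ = ρ₃ := hQuniq ρ hρ0 hQρ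
        right; right
        rw [hzt]
        have : t = -(ρ₃^(m+3)) := by rw [← hρ3]; linarith
        rw [this]
      · have h1 : ρ^(m+3) = t := by rw [abs_of_pos hpos] at habs; linarith
        have hPρ : ρ^(m+5) - ρ^(m+3) - a*ρ^2 + ε*a = 0 := by
          linear_combination (ρ^2-1)*h1 + hid
        rcases hPuniq ρ hρ0 hPρ with h | h
        · left
          rw [hzt]
          have : t = ρ₁^(m+3) := by rw [← h]; linarith
          rw [this]
        · right; left
          rw [hzt]
          have : t = ρ₂^(m+3) := by rw [← h]; linarith
          rw [this]
    · rintro (hz | hz | hz)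
      · exact key (ρ₁^(m+3)) ρ₁ hρ₁0 (abs_of_pos (pow_pos hρ₁0 _)) id1 hta1 z hz
      · exact key (ρ₂^(m+3)) ρ₂ hρ₂0 (abs_of_pos (pow_pos hρ₂0 _)) id2 hta2 z hz
      · refine key (-(ρ₃^(m+3))) ρ₃ hρ₃0 ?_ id3 hta3 z hz
        rw [abs_neg, abs_of_pos (pow_pos hρ₃0 _)]
  rw [hset]
  have hne1 : ((ρ₁^(m+3):ℝ):ℂ) ≠ 0 := by exact_mod_cast (pow_pos hρ₁0 _).ne'
  have hne2 : ((ρ₂^(m+3):ℝ):ℂ) ≠ 0 := by exact_mod_cast (pow_pos hρ₂0 _).ne'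
  have hne3 : ((-(ρ₃^(m+3)):ℝ):ℂ) ≠ 0 := by
    have : (0:ℝ) < ρ₃^(m+3) := pow_pos hρ₃0 _
    exact_mod_cast (by linarith : -(ρ₃^(m+3)) ≠ 0)
  have h1 := card_pow_eq (m+3) (by omega) _ hne1
  have h2 := card_pow_eq (m+3) (by omega) _ hne2
  have h3 := card_pow_eq (m+3) (by omega) _ hne3
  have ht12 : (ρ₁^(m+3) : ℝ) ≠ ρ₂^(m+3) :=
    (pow_lt_pow_left₀ hρ₁₂ hρ₁0.le (by omega)).ne
  have ht13 : (ρ₁^(m+3) : ℝ) ≠ -(ρ₃^(m+3)) := by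
    have h4 : (0:ℝ) < ρ₁^(m+3) := pow_pos hρ₁0 _
    have h5 : (0:ℝ) < ρ₃^(m+3) := pow_pos hρ₃0 _
    intro h; linarith
  have ht23 : (ρ₂^(m+3) : ℝ) ≠ -(ρ₃^(m+3)) := by
    have h4 : (0:ℝ) < ρ₂^(m+3) := pow_pos hρ₂0 _
    have h5 : (0:ℝ) < ρ₃^(m+3) := pow_pos hρ₃0 _
    intro h; linarith
  have hd12 : Disjoint S₁ S₂ := by
    rw [Set.disjoint_left]
    intro z hz1 hz2
    rw [hS₁, Set.mem_setOf_eq] at hz1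
    rw [hS₂, Set.mem_setOf_eq] at hz2
    exact ht12 (by exact_mod_cast hz1.symm.trans hz2)
  have hd13 : Disjoint S₁ S₃ := by
    rw [Set.disjoint_left]
    intro z hz1 hz2
    rw [hS₁, Set.mem_setOf_eq] at hz1
    rw [hS₃, Set.mem_setOf_eq] at hz2
    exact ht13 (by exact_mod_cast hz1.symm.trans hz2)
  have hd23 : Disjoint S₂ S₃ := by
    rw [Set.disjoint_left]
    intro z hz1 hz2
    rw [hS₂, Set.mem_setOf_eq] at hz1
    rw [hS₃, Set.mem_setOf_eq] at hz2
    exact ht23 (by exact_mod_cast hz1.symm.trans hz2)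
  rw [Set.ncard_union_eq (Disjoint.union_right hd12 hd13) h1.2 (h2.2.union h3.2),
    Set.ncard_union_eq hd23 h2.2 h3.2, h1.1, h2.1, h3.1]
  ring
end

section
/- Let n ≥ 3 and r ≥ ((n−2)/(n+2))^((n−2)/(2n)). Then the polynomial g(ρ) = (n+2)ρ^n − nρ^(n−2) + 2r^n is nonnegative for all ρ > 0, with equality possible only at ρ = ((n−2)/(n+2))^(1/2); consequently f₋(ρ) = ρ^(n+2) − ρ^n + r^n ρ² − ε r^n is strictly increasing on (0,∞) and has exactly one positive root for any ε > 0. -/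
open Real Set

private lemma gderiv (m : ℕ) (r : ℝ) (x : ℝ) :
    HasDerivAt (fun ρ : ℝ => ((m:ℝ)+5) * ρ ^ (m+3) - ((m:ℝ)+3) * ρ ^ (m+1) + 2 * r ^ (m+3))
      (((m:ℝ)+3) * x ^ m * (((m:ℝ)+5) * x^2 - ((m:ℝ)+1))) x := by
  have h1 : HasDerivAt (fun ρ : ℝ => ρ ^ (m+3)) (((m:ℝ)+3) * x ^ (m+2)) x := by
    simpa using hasDerivAt_pow (m+3) x
  have h2 : HasDerivAt (fun ρ : ℝ => ρ ^ (m+1)) (((m:ℝ)+1) * x ^ m) x := by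
    simpa using hasDerivAt_pow (m+1) x
  have h := ((h1.const_mul ((m:ℝ)+5)).sub (h2.const_mul ((m:ℝ)+3))).add_const (2 * r ^ (m+3))
  refine h.congr_deriv ?_
  ring

private lemma fderiv' (m : ℕ) (r ε : ℝ) (x : ℝ) :
    HasDerivAt (fun ρ : ℝ => ρ ^ (m+5) - ρ ^ (m+3) + r ^ (m+3) * ρ ^ 2 - ε * r ^ (m+3))
      (x * (((m:ℝ)+5) * x ^ (m+3) - ((m:ℝ)+3) * x ^ (m+1) + 2 * r ^ (m+3))) x := by
  have h1 : HasDerivAt (fun ρ : ℝ => ρ ^ (m+5)) (((m:ℝ)+5) * x ^ (m+4)) x := by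
    simpa using hasDerivAt_pow (m+5) x
  have h2 : HasDerivAt (fun ρ : ℝ => ρ ^ (m+3)) (((m:ℝ)+3) * x ^ (m+2)) x := by
    simpa using hasDerivAt_pow (m+3) x
  have h3 : HasDerivAt (fun ρ : ℝ => ρ ^ 2) (2 * x) x := by
    simpa using hasDerivAt_pow 2 x
  have h := (((h1.sub h2).add (h3.const_mul (r^(m+3)))).sub_const (ε * r ^ (m+3)))
  refine h.congr_deriv ?_
  ring

/-- For `n ≥ 3` and `r ≥ ((n−2)/(n+2))^((n−2)/(2n))`, the polynomial
`g(ρ) = (n+2)ρ^n − nρ^(n−2) + 2r^n` is nonnegative for `ρ > 0`, vanishing at most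
at `ρ = ((n−2)/(n+2))^(1/2)`; consequently
`f₋(ρ) = ρ^(n+2) − ρ^n + r^n ρ² − ε r^n` is strictly increasing on `(0,∞)` and has
exactly one positive root for any `ε > 0`. -/
theorem stmt_14 (n : ℕ) (hn : 3 ≤ n) (r ε : ℝ) (hr0 : 0 < r) (hε : 0 < ε)
    (hr : r ≥ (((n : ℝ) - 2) / ((n : ℝ) + 2)) ^ ((((n : ℝ) - 2)) / (2 * (n : ℝ)))) :
    (∀ ρ : ℝ, 0 < ρ →
      0 ≤ ((n : ℝ) + 2) * ρ ^ n - (n : ℝ) * ρ ^ (n - 2) + 2 * r ^ n) ∧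
    (∀ ρ : ℝ, 0 < ρ →
      ((n : ℝ) + 2) * ρ ^ n - (n : ℝ) * ρ ^ (n - 2) + 2 * r ^ n = 0 →
        ρ = Real.sqrt (((n : ℝ) - 2) / ((n : ℝ) + 2))) ∧
    StrictMonoOn (fun ρ : ℝ => ρ ^ (n + 2) - ρ ^ n + r ^ n * ρ ^ 2 - ε * r ^ n)
      (Set.Ioi (0 : ℝ)) ∧
    (∃! ρ : ℝ, 0 < ρ ∧ ρ ^ (n + 2) - ρ ^ n + r ^ n * ρ ^ 2 - ε * r ^ n = 0) := by
  obtain ⟨m, rfl⟩ : ∃ m, n = m + 3 := ⟨n - 3, by omega⟩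
  set A : ℝ := ((m:ℝ)+1)/((m:ℝ)+5) with hAdef
  have hA : (0:ℝ) < A := by positivity
  set c : ℝ := Real.sqrt A with hcdef
  have hc0 : 0 < c := Real.sqrt_pos.mpr hA
  have hc2 : c ^ 2 = A := Real.sq_sqrt hA.le
  set G : ℝ → ℝ := fun ρ => ((m:ℝ)+5) * ρ ^ (m+3) - ((m:ℝ)+3) * ρ ^ (m+1) + 2 * r ^ (m+3)
    with hGdef
  set F : ℝ → ℝ := fun ρ => ρ ^ (m+5) - ρ ^ (m+3) + r ^ (m+3) * ρ ^ 2 - ε * r ^ (m+3)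
    with hFdef
  -- rewrite hypothesis hr
  have hr' : A ^ (((m:ℝ)+1)/(2*((m:ℝ)+3))) ≤ r := by
    have e1 : ((↑(m+3) : ℝ) - 2) / ((↑(m+3) : ℝ) + 2) = A := by push_cast [hAdef]; ring
    have e2 : ((↑(m+3) : ℝ) - 2) / (2 * (↑(m+3) : ℝ)) = ((m:ℝ)+1)/(2*((m:ℝ)+3)) := by
      push_cast; ring
    rw [ge_iff_le, e1, e2] at hr
    exact hr
  -- key: c^(m+1) ≤ r^(m+3)
  have hkey : c ^ (m+1) ≤ r ^ (m+3) := by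
    have hc' : c = A ^ ((1:ℝ)/2) := by rw [hcdef, Real.sqrt_eq_rpow]
    have h1 : c ^ (m+1) = A ^ (((m:ℝ)+1)/2) := by
      rw [hc', ← Real.rpow_natCast (A ^ ((1:ℝ)/2)) (m+1), ← Real.rpow_mul hA.le]
      congr 1
      push_cast; ring
    have h2 : (A ^ (((m:ℝ)+1)/(2*((m:ℝ)+3)))) ^ (m+3) = A ^ (((m:ℝ)+1)/2) := by
      rw [← Real.rpow_natCast (A ^ (((m:ℝ)+1)/(2*((m:ℝ)+3)))) (m+3), ← Real.rpow_mul hA.le]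
      congr 1
      have hne : (2*((m:ℝ)+3)) ≠ 0 := by positivity
      field_simp
      push_cast
      ring
    calc c ^ (m+1) = A ^ (((m:ℝ)+1)/2) := h1
      _ = (A ^ (((m:ℝ)+1)/(2*((m:ℝ)+3)))) ^ (m+3) := h2.symm
      _ ≤ r ^ (m+3) := pow_le_pow_left₀ (by positivity) hr' _
  -- value at c
  have hGc : G c = 2 * r ^ (m+3) - 2 * c ^ (m+1) := by
    have e : ((m:ℝ)+5) * c ^ (m+3) = ((m:ℝ)+1) * c ^ (m+1) := by
      have : c ^ (m+3) = c ^ 2 * c ^ (m+1) := by ring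
      rw [this, hc2, hAdef]
      field_simp
    simp only [hGdef]
    rw [e]; ring
  have hGc0 : 0 ≤ G c := by rw [hGc]; linarith
  -- monotonicity of G
  have hGanti : StrictAntiOn G (Ioc 0 c) := by
    apply strictAntiOn_of_deriv_neg (convex_Ioc 0 c)
    · exact (Continuous.continuousOn (by fun_prop))
    · intro x hx
      rw [interior_Ioc] at hx
      rw [(gderiv m r x).deriv]
      have hx0 : 0 < x := hx.1
      have hxc : x < c := hx.2
      have hx2 : x ^ 2 < A := by
        rw [← hc2]
        exact pow_lt_pow_left₀ hxc hx0.le (by norm_num)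
      have h5 : ((m:ℝ)+5) * x ^ 2 - ((m:ℝ)+1) < 0 := by
        rw [hAdef] at hx2
        have hm5 : (0:ℝ) < (m:ℝ)+5 := by positivity
        rw [lt_div_iff₀ hm5] at hx2
        nlinarith
      exact mul_neg_of_pos_of_neg (by positivity) h5
  have hGmono : StrictMonoOn G (Ici c) := by
    apply strictMonoOn_of_deriv_pos (convex_Ici c)
    · exact (Continuous.continuousOn (by fun_prop))
    · intro x hx
      rw [interior_Ici] at hx
      rw [(gderiv m r x).deriv]
      have hx0 : 0 < x := hc0.trans hx
      have hx2 : A < x ^ 2 := by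
        rw [← hc2]
        exact pow_lt_pow_left₀ hx hc0.le (by norm_num)
      have h5 : 0 < ((m:ℝ)+5) * x ^ 2 - ((m:ℝ)+1) := by
        rw [hAdef] at hx2
        have hm5 : (0:ℝ) < (m:ℝ)+5 := by positivity
        rw [div_lt_iff₀ hm5] at hx2
        nlinarith
      exact mul_pos (by positivity) h5
  -- G ρ ≥ G c for ρ > 0, strict unless ρ = c
  have hGmin : ∀ ρ : ℝ, 0 < ρ → ρ ≠ c → G c < G ρ := by
    intro ρ hρ hne
    rcases lt_or_gt_of_ne hne with h | h
    · exact hGanti ⟨hρ, h.le⟩ ⟨hc0, le_refl c⟩ h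
    · exact hGmono (le_refl c) h.le h
  have hGnn : ∀ ρ : ℝ, 0 < ρ → 0 ≤ G ρ := by
    intro ρ hρ
    rcases eq_or_ne ρ c with h | h
    · rw [h]; exact hGc0
    · exact hGc0.trans (hGmin ρ hρ h).le
  -- strict monotonicity of F
  have hFmono1 : StrictMonoOn F (Ioc 0 c) := by
    apply strictMonoOn_of_deriv_pos (convex_Ioc 0 c)
    · exact (Continuous.continuousOn (by fun_prop))
    · intro x hx
      rw [interior_Ioc] at hx
      rw [(fderiv' m r ε x).deriv]
      have h1 : 0 < G x := lt_of_le_of_lt hGc0 (hGmin x hx.1 (ne_of_lt hx.2))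
      exact mul_pos hx.1 h1
  have hFmono2 : StrictMonoOn F (Ici c) := by
    apply strictMonoOn_of_deriv_pos (convex_Ici c)
    · exact (Continuous.continuousOn (by fun_prop))
    · intro x hx
      rw [interior_Ici] at hx
      rw [(fderiv' m r ε x).deriv]
      have h1 : 0 < G x := lt_of_le_of_lt hGc0 (hGmin x (hc0.trans hx) (ne_of_gt hx))
      exact mul_pos (hc0.trans hx) h1
  have hFmono : StrictMonoOn F (Ioi 0) := by
    intro x hx y hy hxy
    simp only [mem_Ioi] at hx hy
    rcases le_or_gt y c with h | h
    · exact hFmono1 ⟨hx, (le_of_lt hxy).trans h⟩ ⟨hy, h⟩ hxy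
    rcases le_or_gt c x with h' | h'
    · exact hFmono2 h' h.le hxy
    · calc F x < F c := hFmono1 ⟨hx, h'.le⟩ ⟨hc0, le_refl c⟩ h'
        _ < F y := hFmono2 (le_refl c) h.le h
  -- existence of root
  have hFcont : Continuous F := by fun_prop
  have hF0 : F 0 < 0 := by
    simp only [hFdef]
    norm_num
    positivity
  have hev : ∀ᶠ x in nhdsWithin (0:ℝ) (Ioi 0), F x < 0 := by
    apply Filter.Eventually.filter_mono nhdsWithin_le_nhds
    exact hFcont.continuousAt.eventually_lt continuousAt_const hF0
  obtain ⟨a, haF, ha0⟩ := (hev.and eventually_mem_nhdsWithin).exists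
  have ha0 : (0:ℝ) < a := ha0
  set b : ℝ := 1 + Real.sqrt ε with hbdef
  have hb1 : (1:ℝ) ≤ b := by
    have := Real.sqrt_nonneg ε
    rw [hbdef]; linarith
  have hb0 : (0:ℝ) < b := by linarith
  have hFb : 0 < F b := by
    have h1 : b ^ (m+3) ≤ b ^ (m+5) := pow_le_pow_right₀ hb1 (by omega)
    have h2 : ε < b ^ 2 := by
      have hs := Real.sq_sqrt hε.le
      have hs2 := Real.sqrt_nonneg ε
      rw [hbdef]
      nlinarith
    have h3 : 0 < r ^ (m+3) * (b ^ 2 - ε) := by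
      apply mul_pos (by positivity)
      linarith
    simp only [hFdef]
    nlinarith
  have hab : a < b := by
    by_contra h
    push_neg at h
    have := hFmono.monotoneOn (mem_Ioi.mpr hb0) (mem_Ioi.mpr ha0) h
    linarith
  obtain ⟨ρ₀, hρ₀mem, hρ₀⟩ :=
    intermediate_value_Icc hab.le hFcont.continuousOn ⟨haF.le, hFb.le⟩
  have hρ₀pos : 0 < ρ₀ := lt_of_lt_of_le ha0 hρ₀mem.1
  -- assemble goals
  have hsub : m + 3 - 2 = m + 1 := by omega
  have hexp : m + 3 + 2 = m + 5 := by omega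
  have hGeq : ∀ ρ : ℝ,
      ((↑(m+3):ℝ) + 2) * ρ ^ (m+3) - (↑(m+3):ℝ) * ρ ^ (m+3-2) + 2 * r ^ (m+3) = G ρ := by
    intro ρ
    rw [hsub]
    push_cast [hGdef]
    ring
  have hFeq : (fun ρ : ℝ => ρ ^ (m+3+2) - ρ ^ (m+3) + r ^ (m+3) * ρ ^ 2 - ε * r ^ (m+3)) = F := by
    funext ρ
    rw [hexp]
  refine ⟨?_, ?_, ?_, ?_⟩
  · intro ρ hρ
    rw [hGeq ρ]
    exact hGnn ρ hρ
  · intro ρ hρ h0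
    rw [hGeq ρ] at h0
    by_contra hne
    have e1 : ((↑(m+3) : ℝ) - 2) / ((↑(m+3) : ℝ) + 2) = A := by push_cast [hAdef]; ring
    rw [e1, ← hcdef] at hne
    have := hGmin ρ hρ hne
    linarith [hGc0]
  · exact hFmono
  · refine ⟨ρ₀, ⟨hρ₀pos, hρ₀⟩, ?_⟩
    rintro y ⟨hy0, hyF⟩
    have hyF' : F y = 0 := hyF
    exact hFmono.injOn (mem_Ioi.mpr hy0) (mem_Ioi.mpr hρ₀pos) (hyF'.trans hρ₀.symm)
end

section
/- For every integer n ≥ 3 and every real r with 0 < r < r_crit, the inequality ((n+6)/(n+8)) · r^((3n+1)/(3n−6)) < ((n−2)/(n+2))^(1/2) holds, where r_crit = ((n−2)/n)^(1/2) (2/(n−2))^(1/n). -/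
/-- Helper: reduce a real inequality to natural powers. -/
lemma aux_pow_le {a b : ℝ} (k : ℕ) (hk : k ≠ 0) (hb : 0 ≤ b) (h : a ^ k ≤ b ^ k) : a ≤ b :=
  le_of_pow_le_pow_left₀ hk hb h

/-- For every integer `n ≥ 3` and `0 < r < r_crit = ((n−2)/n)^(1/2)(2/(n−2))^(1/n)`,
the inequality `((n+6)/(n+8)) r^((3n+1)/(3n−6)) < ((n−2)/(n+2))^(1/2)` holds. -/
theorem stmt_18 (n : ℕ) (hn : 3 ≤ n) (r : ℝ) (hr : 0 < r)
    (hrc : r < Real.sqrt (((n : ℝ) - 2) / n) * (2 / ((n : ℝ) - 2)) ^ ((1 : ℝ) / n)) :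
    ((n : ℝ) + 6) / ((n : ℝ) + 8) *
        r ^ ((3 * (n : ℝ) + 1) / (3 * (n : ℝ) - 6)) <
      Real.sqrt (((n : ℝ) - 2) / ((n : ℝ) + 2)) := by
  have hn3 : (3 : ℝ) ≤ (n : ℝ) := by exact_mod_cast hn
  set c : ℝ := Real.sqrt (((n : ℝ) - 2) / n) * (2 / ((n : ℝ) - 2)) ^ ((1 : ℝ) / n) with hc
  set p : ℝ := (3 * (n : ℝ) + 1) / (3 * (n : ℝ) - 6) with hpdef
  have hc0 : 0 < c := hr.trans hrc
  have hden : 0 < 3 * (n : ℝ) - 6 := by linarith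
  have hp : 0 < p := div_pos (by linarith) hden
  have hfac : 0 < ((n : ℝ) + 6) / ((n : ℝ) + 8) := by positivity
  have step1 : r ^ p < c ^ p := Real.rpow_lt_rpow hr.le hrc hp
  have key : ((n : ℝ) + 6) / ((n : ℝ) + 8) * c ^ p ≤
      Real.sqrt (((n : ℝ) - 2) / ((n : ℝ) + 2)) := by
    rcases lt_or_ge n 6 with h6 | h6
    · interval_cases n
      · -- n = 3 : c = √(1/3) * 2^(1/3), p = 10/3
        rw [show ((3:ℕ):ℝ) = 3 from by norm_num] at hc hpdef ⊢
        have hcv : c = Real.sqrt (1/3) * (2:ℝ) ^ ((1:ℝ)/3) := by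
          rw [hc]; congr 1 <;> norm_num
        have hpv : p = 10/3 := by rw [hpdef]; norm_num
        rw [show ((3:ℝ) - 2)/((3:ℝ) + 2) = 1/5 from by norm_num]
        apply aux_pow_le 18 (by norm_num) (Real.sqrt_nonneg _)
        have hR : Real.sqrt (1/5) ^ (18:ℕ) = ((1:ℝ)/5) ^ (9:ℕ) := by
          rw [show (18:ℕ) = 2 * 9 from rfl, pow_mul, Real.sq_sqrt (by norm_num : (0:ℝ) ≤ 1/5)]
        rw [hR]
        have hbase : (0:ℝ) ≤ Real.sqrt (1/3) * (2:ℝ) ^ ((1:ℝ)/3) := by positivity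
        rw [hcv, hpv, mul_pow,
          show ((Real.sqrt (1/3) * (2:ℝ) ^ ((1:ℝ)/3)) ^ ((10:ℝ)/3)) ^ (18:ℕ)
              = (Real.sqrt (1/3) * (2:ℝ) ^ ((1:ℝ)/3)) ^ (60:ℕ) by
            rw [← Real.rpow_natCast (_ ^ ((10:ℝ)/3)) 18, ← Real.rpow_mul hbase,
              ← Real.rpow_natCast (Real.sqrt (1/3) * (2:ℝ) ^ ((1:ℝ)/3)) 60]
            norm_num]
        rw [mul_pow, show (60:ℕ) = 2 * 30 from rfl, pow_mul,
          Real.sq_sqrt (by norm_num : (0:ℝ) ≤ 1/3),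
          show ((2:ℝ) ^ ((1:ℝ)/3)) ^ (2 * 30 : ℕ) = (2:ℝ) ^ (20:ℕ) by
            rw [← Real.rpow_natCast ((2:ℝ) ^ ((1:ℝ)/3)) (2*30), ← Real.rpow_mul (by norm_num),
              ← Real.rpow_natCast 2 20]
            norm_num]
        norm_num
      · -- n = 4 : c = √(1/2), p = 13/6
        rw [show ((4:ℕ):ℝ) = 4 from by norm_num] at hc hpdef ⊢
        have hcv : c = Real.sqrt (1/2) := by
          rw [hc, show (2:ℝ)/((4:ℝ)-2) = 1 from by norm_num, Real.one_rpow, mul_one]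
          congr 1; norm_num
        have hpv : p = 13/6 := by rw [hpdef]; norm_num
        rw [show ((4:ℝ) - 2)/((4:ℝ) + 2) = 1/3 from by norm_num]
        apply aux_pow_le 12 (by norm_num) (Real.sqrt_nonneg _)
        have hR : Real.sqrt (1/3) ^ (12:ℕ) = ((1:ℝ)/3) ^ (6:ℕ) := by
          rw [show (12:ℕ) = 2 * 6 from rfl, pow_mul, Real.sq_sqrt (by norm_num : (0:ℝ) ≤ 1/3)]
        rw [hR, hcv, hpv, mul_pow,
          show ((Real.sqrt (1/2)) ^ ((13:ℝ)/6)) ^ (12:ℕ) = (Real.sqrt (1/2)) ^ (26:ℕ) by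
            rw [← Real.rpow_natCast (_ ^ ((13:ℝ)/6)) 12, ← Real.rpow_mul (Real.sqrt_nonneg _),
              ← Real.rpow_natCast (Real.sqrt (1/2)) 26]
            norm_num,
          show (26:ℕ) = 2 * 13 from rfl, pow_mul, Real.sq_sqrt (by norm_num : (0:ℝ) ≤ 1/2)]
        norm_num
      · -- n = 5 : c = √(3/5) * (2/3)^(1/5), p = 16/9
        rw [show ((5:ℕ):ℝ) = 5 from by norm_num] at hc hpdef ⊢
        have hcv : c = Real.sqrt (3/5) * ((2:ℝ)/3) ^ ((1:ℝ)/5) := by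
          rw [hc]; congr 1 <;> norm_num
        have hpv : p = 16/9 := by rw [hpdef]; norm_num
        rw [show ((5:ℝ) - 2)/((5:ℝ) + 2) = 3/7 from by norm_num]
        apply aux_pow_le 90 (by norm_num) (Real.sqrt_nonneg _)
        have hR : Real.sqrt (3/7) ^ (90:ℕ) = ((3:ℝ)/7) ^ (45:ℕ) := by
          rw [show (90:ℕ) = 2 * 45 from rfl, pow_mul, Real.sq_sqrt (by norm_num : (0:ℝ) ≤ 3/7)]
        rw [hR]
        have hbase : (0:ℝ) ≤ Real.sqrt (3/5) * ((2:ℝ)/3) ^ ((1:ℝ)/5) := by positivity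
        rw [hcv, hpv, mul_pow,
          show ((Real.sqrt (3/5) * ((2:ℝ)/3) ^ ((1:ℝ)/5)) ^ ((16:ℝ)/9)) ^ (90:ℕ)
              = (Real.sqrt (3/5) * ((2:ℝ)/3) ^ ((1:ℝ)/5)) ^ (160:ℕ) by
            rw [← Real.rpow_natCast (_ ^ ((16:ℝ)/9)) 90, ← Real.rpow_mul hbase,
              ← Real.rpow_natCast (Real.sqrt (3/5) * ((2:ℝ)/3) ^ ((1:ℝ)/5)) 160]
            norm_num]
        rw [mul_pow, show (160:ℕ) = 2 * 80 from rfl, pow_mul,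
          Real.sq_sqrt (by norm_num : (0:ℝ) ≤ 3/5),
          show (((2:ℝ)/3) ^ ((1:ℝ)/5)) ^ (2 * 80 : ℕ) = ((2:ℝ)/3) ^ (32:ℕ) by
            rw [← Real.rpow_natCast (((2:ℝ)/3) ^ ((1:ℝ)/5)) (2*80), ← Real.rpow_mul (by norm_num),
              ← Real.rpow_natCast ((2:ℝ)/3) 32]
            norm_num]
        norm_num
    · -- n ≥ 6
      have hn6 : (6 : ℝ) ≤ (n : ℝ) := by exact_mod_cast h6
      have hA : (2 / ((n : ℝ) - 2)) ^ ((1 : ℝ) / n) ≤ 1 :=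
        Real.rpow_le_one (div_nonneg (by norm_num) (by linarith))
          (by rw [div_le_one (by linarith)]; linarith)
          (by positivity)
      have hs1 : Real.sqrt (((n : ℝ) - 2) / n) ≤ 1 :=
        Real.sqrt_le_one.mpr (by rw [div_le_one (by linarith)]; linarith)
      have hcle : c ≤ Real.sqrt (((n : ℝ) - 2) / n) := by
        rw [hc]
        exact mul_le_of_le_one_right (Real.sqrt_nonneg _) hA
      have hc1 : c ≤ 1 := hcle.trans hs1
      have hp1 : 1 ≤ p := by
        rw [hpdef, le_div_iff₀ hden]; linarith
      have hcp : c ^ p ≤ c := by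
        calc c ^ p ≤ c ^ (1:ℝ) := Real.rpow_le_rpow_of_exponent_ge hc0 hc1 hp1
          _ = c := Real.rpow_one c
      have hfin : ((n : ℝ) + 6) / ((n : ℝ) + 8) * Real.sqrt (((n : ℝ) - 2) / n) ≤
          Real.sqrt (((n : ℝ) - 2) / ((n : ℝ) + 2)) := by
        rw [← Real.sqrt_sq hfac.le, ← Real.sqrt_mul (by positivity)]
        apply Real.sqrt_le_sqrt
        rw [div_pow, div_mul_div_comm, div_le_div_iff₀ (by positivity) (by linarith)]
        nlinarith [sq_nonneg ((n:ℝ) - 6), sq_nonneg ((n:ℝ) + 6)]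
      calc ((n : ℝ) + 6) / ((n : ℝ) + 8) * c ^ p
          ≤ ((n : ℝ) + 6) / ((n : ℝ) + 8) * Real.sqrt (((n : ℝ) - 2) / n) := by
            exact mul_le_mul_of_nonneg_left (hcp.trans hcle) hfac.le
        _ ≤ Real.sqrt (((n : ℝ) - 2) / ((n : ℝ) + 2)) := hfin
  calc ((n : ℝ) + 6) / ((n : ℝ) + 8) * r ^ p
      < ((n : ℝ) + 6) / ((n : ℝ) + 8) * c ^ p := by
        exact mul_lt_mul_of_pos_left step1 hfac
    _ ≤ Real.sqrt (((n : ℝ) - 2) / ((n : ℝ) + 2)) := key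
end

section
/- Let n ≥ 3, δ > 0, and s ≥ √(1+δ) · ((n−2)/(n+2))^((n−2)/(2n)). Then the equation w^(n−1)/(w^n − s^n) + δ/w = conj(w) has exactly 3n complex solutions. -/
open Complex

section Lemmas

lemma gp_unique_low (n : ℕ) (hn : 3 ≤ n) (δ c : ℝ) (hδ : 0 < δ) (hc : 0 < c)
    (t t' : ℝ) (ht : 0 < t) (htt : t < t') (hu' : t'^2 < δ)
    (e1 : t^n * (t^2 - 1 - δ) = c * (t^2 - δ))
    (e2 : t'^n * (t'^2 - 1 - δ) = c * (t'^2 - δ)) : False := by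
  have ht' : 0 < t' := ht.trans htt
  have hT : 0 < t^n := pow_pos ht n
  have hTT : t^n < t'^n := pow_lt_pow_left₀ htt ht.le (by omega)
  have hu : t^2 < δ := by nlinarith
  have p1 : (0:ℝ) < 1 + δ - t^2 := by nlinarith
  have p3 : (0:ℝ) < 1 + δ - t'^2 := by nlinarith
  have p2 : (0:ℝ) < δ - t^2 := by linarith
  have p4 : (0:ℝ) < δ - t'^2 := by linarith
  have k1 : t^n * ((1+δ-t^2)*(δ-t'^2)) = t'^n * ((1+δ-t'^2)*(δ-t^2)) := by
    linear_combination (δ - t^2) * e2 - (δ - t'^2) * e1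
  have key : (1+δ-t^2)*(δ-t'^2) < (1+δ-t'^2)*(δ-t^2) := by nlinarith
  have : t^n * ((1+δ-t^2)*(δ-t'^2)) < t'^n * ((1+δ-t'^2)*(δ-t^2)) := by
    calc t^n * ((1+δ-t^2)*(δ-t'^2)) < t'^n * ((1+δ-t^2)*(δ-t'^2)) :=
          mul_lt_mul_of_pos_right hTT (mul_pos p1 p4)
      _ < t'^n * ((1+δ-t'^2)*(δ-t^2)) :=
          mul_lt_mul_of_pos_left key (pow_pos ht' n)
  linarith [k1 ▸ this]

lemma gp_unique_high (n : ℕ) (hn : 3 ≤ n) (δ c : ℝ) (hδ : 0 < δ) (hc : 0 < c)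
    (t t' : ℝ) (ht : 0 < t) (htt : t < t') (hu : 1 + δ < t^2)
    (e1 : t^n * (t^2 - 1 - δ) = c * (t^2 - δ))
    (e2 : t'^n * (t'^2 - 1 - δ) = c * (t'^2 - δ)) : False := by
  have ht' : 0 < t' := ht.trans htt
  have hT : 0 < t^n := pow_pos ht n
  have hTT : t^n < t'^n := pow_lt_pow_left₀ htt ht.le (by omega)
  have hu' : 1 + δ < t'^2 := by nlinarith
  have p1 : (0:ℝ) < t^2 - 1 - δ := by linarith
  have p3 : (0:ℝ) < t'^2 - 1 - δ := by linarith
  have p2 : (0:ℝ) < t^2 - δ := by linarith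
  have p4 : (0:ℝ) < t'^2 - δ := by linarith
  have k1 : t^n * ((t^2-1-δ)*(t'^2-δ)) = t'^n * ((t'^2-1-δ)*(t^2-δ)) := by
    linear_combination (t'^2 - δ) * e1 - (t^2 - δ) * e2
  have key : (t^2-1-δ)*(t'^2-δ) < (t'^2-1-δ)*(t^2-δ) := by nlinarith
  have : t^n * ((t^2-1-δ)*(t'^2-δ)) < t'^n * ((t'^2-1-δ)*(t^2-δ)) := by
    calc t^n * ((t^2-1-δ)*(t'^2-δ)) < t'^n * ((t^2-1-δ)*(t'^2-δ)) :=
          mul_lt_mul_of_pos_right hTT (mul_pos p1 p4)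
      _ < t'^n * ((t'^2-1-δ)*(t^2-δ)) :=
          mul_lt_mul_of_pos_left key (pow_pos ht' n)
  linarith [k1 ▸ this]

lemma gp_neg_mid (n : ℕ) (δ c : ℝ) (hδ : 0 < δ) (hc : 0 < c)
    (t : ℝ) (ht : 0 < t) (h1 : δ ≤ t^2) (h2 : t^2 ≤ 1 + δ) :
    t^n * (t^2 - 1 - δ) - c * (t^2 - δ) < 0 := by
  have hT : 0 < t^n := pow_pos ht n
  by_contra h
  push_neg at h
  have hX : 0 ≤ t^n*(1+δ-t^2) := mul_nonneg hT.le (by linarith)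
  have hY : 0 ≤ c*(t^2-δ) := mul_nonneg hc.le (by linarith)
  have hX0 : t^n*(1+δ-t^2) = 0 := le_antisymm (by nlinarith) hX
  have h2' : t^2 = 1 + δ := by
    rcases mul_eq_zero.1 hX0 with h | h
    · exact absurd h hT.ne'
    · linarith
  nlinarith

-- max of A t^m - B t^{m+2} over t ≥ 0 is at t₀ = sqrt(mA/((m+2)B))
lemma pow_max_lemma (m : ℕ) (hm : 1 ≤ m) (A B : ℝ) (hA : 0 < A) (hB : 0 < B)
    (t : ℝ) (ht : 0 ≤ t) :
    A*t^m - B*t^(m+2) ≤ A*(Real.sqrt (m*A/((m+2)*B)))^m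
      - B*(Real.sqrt (m*A/((m+2)*B)))^(m+2) := by
  set t₀ := Real.sqrt (m*A/((m+2)*B)) with ht₀def
  have hq : (0:ℝ) < m*A/((m+2)*B) := by
    apply div_pos (by positivity) (by positivity)
  have ht₀ : 0 < t₀ := Real.sqrt_pos.2 hq
  have ht₀sq : t₀^2 = m*A/((m+2)*B) := Real.sq_sqrt hq.le
  have hBA : ((m:ℝ)+2)*B*t₀^2 = m*A := by
    rw [ht₀sq]; field_simp
  set f : ℝ → ℝ := fun x => A*x^m - B*x^(m+2) with hfdef
  have hder : ∀ x : ℝ, HasDerivAt f (A*(m*x^(m-1)) - B*((m+2)*x^(m+1))) x := by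
    intro x
    have h1 := (hasDerivAt_pow m x).const_mul A
    have h2 := (hasDerivAt_pow (m+2) x).const_mul B
    have : m + 2 - 1 = m + 1 := by omega
    rw [this] at h2
    push_cast at h1 h2 ⊢
    exact h1.sub h2
  have hcont : Continuous f := by fun_prop
  have mono : MonotoneOn f (Set.Icc 0 t₀) := by
    apply monotoneOn_of_deriv_nonneg (convex_Icc _ _) hcont.continuousOn
      (fun x _ => ((hder x).differentiableAt).differentiableWithinAt)
    intro x hx
    rw [interior_Icc] at hx
    rw [(hder x).deriv]
    have hx0 : 0 < x := hx.1
    have hx2 : x^2 ≤ t₀^2 := pow_le_pow_left₀ hx0.le hx.2.le 2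
    have h3 : ((m:ℝ)+2)*B*x^2 ≤ m*A := by
      rw [← hBA, mul_assoc, mul_assoc]
      exact mul_le_mul_of_nonneg_left (mul_le_mul_of_nonneg_left hx2 hB.le) (by positivity)
    have e1 : x^(m+1) = x^(m-1) * x^2 := by rw [← pow_add]; congr 1; omega
    have h4 : 0 ≤ x^(m-1) * ((m:ℝ)*A - ((m:ℝ)+2)*B*x^2) :=
      mul_nonneg (pow_nonneg hx0.le _) (by linarith)
    rw [e1]; nlinarith [h4]
  have anti : AntitoneOn f (Set.Ici t₀) := by
    apply antitoneOn_of_deriv_nonpos (convex_Ici _) hcont.continuousOn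
      (fun x _ => ((hder x).differentiableAt).differentiableWithinAt)
    intro x hx
    rw [interior_Ici] at hx
    rw [(hder x).deriv]
    have hx0 : 0 < x := ht₀.trans hx
    have hx2 : t₀^2 ≤ x^2 := pow_le_pow_left₀ ht₀.le hx.le 2
    have h3 : (m:ℝ)*A ≤ ((m:ℝ)+2)*B*x^2 := by
      rw [← hBA, mul_assoc, mul_assoc]
      exact mul_le_mul_of_nonneg_left (mul_le_mul_of_nonneg_left hx2 hB.le) (by positivity)
    have e1 : x^(m+1) = x^(m-1) * x^2 := by rw [← pow_add]; congr 1; omega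
    have h4 : x^(m-1) * ((m:ℝ)*A - ((m:ℝ)+2)*B*x^2) ≤ 0 :=
      mul_nonpos_of_nonneg_of_nonpos (pow_nonneg hx0.le _) (by linarith)
    rw [e1]; nlinarith [h4]
  rcases le_total t t₀ with h | h
  · exact mono ⟨ht, h⟩ ⟨le_refl 0 |>.trans ht₀.le, le_refl t₀⟩ h
  · exact anti (Set.mem_Ici.2 (le_refl t₀)) (Set.mem_Ici.2 h) h
lemma threshold (n : ℕ) (hn : 3 ≤ n) (δ s : ℝ) (hδ : 0 < δ)
    (hs : s ≥ Real.sqrt (1 + δ) *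
      (((n : ℝ) - 2) / ((n : ℝ) + 2)) ^ ((((n : ℝ) - 2)) / (2 * (n : ℝ)))) :
    ∀ t : ℝ, 0 ≤ t → (n:ℝ)*(1+δ)*t^(n-2) - ((n:ℝ)+2)*t^n ≤ 2*(s^n) := by
  intro t ht
  have hn3 : (3:ℝ) ≤ (n:ℝ) := by exact_mod_cast hn
  have h1δ : (0:ℝ) < 1+δ := by linarith
  set r : ℝ := ((n:ℝ)-2)/((n:ℝ)+2) with hrdef
  have hr : 0 < r := by apply div_pos <;> linarith
  have hr1 : r ≤ 1 := by rw [hrdef, div_le_one (by linarith)]; linarith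
  set e : ℝ := (((n:ℝ)-2))/(2*(n:ℝ)) with hedef
  have hcast : ((n-2 : ℕ):ℝ) = (n:ℝ)-2 := by
    rw [Nat.cast_sub (by omega : 2 ≤ n)]; norm_num
  have key := pow_max_lemma (n-2) (by omega) ((n:ℝ)*(1+δ)) ((n:ℝ)+2)
    (by positivity) (by positivity) t ht
  rw [(by omega : (n-2)+2 = n)] at key
  have hq : ((n-2:ℕ):ℝ) * ((n:ℝ)*(1+δ)) / (((((n-2:ℕ)):ℝ)+2)*((n:ℝ)+2)) = (1+δ)*r := by
    rw [hcast, hrdef, show ((n:ℝ)-2+2) = n by ring]; field_simp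
  rw [hq] at key
  set t₀ : ℝ := Real.sqrt ((1+δ)*r) with ht₀def
  have ht₀pos : 0 < t₀ := Real.sqrt_pos.2 (by positivity)
  have ht₀sq : t₀^2 = (1+δ)*r := Real.sq_sqrt (by positivity)
  -- value at t₀
  have hval : (n:ℝ)*(1+δ)*t₀^(n-2) - ((n:ℝ)+2)*t₀^n = 2*(1+δ)*t₀^(n-2) := by
    have h1 : t₀^n = t₀^(n-2)*t₀^2 := by rw [← pow_add]; congr 1; omega
    have h2 : ((n:ℝ)+2)*((1+δ)*r) = ((n:ℝ)-2)*(1+δ) := by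
      rw [hrdef]; field_simp
    rw [h1, ht₀sq]; linear_combination (-(t₀^(n-2))) * h2
  rw [hval] at key
  -- bound the value by 2 s^n
  have hsn : (1+δ)*t₀^(n-2) ≤ s^n := by
    have hs0 : 0 ≤ Real.sqrt (1+δ) * r ^ e := by positivity
    have h5 : (Real.sqrt (1+δ) * r ^ e)^n ≤ s^n := pow_le_pow_left₀ hs0 hs n
    have h6 : (Real.sqrt (1+δ) * r ^ e)^n
        = (1+δ) * (Real.sqrt (1+δ))^(n-2) * (r^e)^n := by
      rw [mul_pow]
      have : (Real.sqrt (1+δ))^n = (Real.sqrt (1+δ))^(n-2) * (Real.sqrt (1+δ))^2 := by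
        rw [← pow_add]; congr 1; omega
      rw [this, Real.sq_sqrt h1δ.le]; ring
    have h7 : (r^e)^n = (Real.sqrt r)^(n-2) := by
      rw [← Real.rpow_natCast (r^e) n, ← Real.rpow_mul hr.le]
      rw [Real.sqrt_eq_rpow, ← Real.rpow_natCast (r ^ (1/2:ℝ)) (n-2), ← Real.rpow_mul hr.le]
      congr 1
      rw [hedef, hcast]
      field_simp
    have h8 : t₀^(n-2) = (Real.sqrt (1+δ))^(n-2) * (Real.sqrt r)^(n-2) := by
      rw [ht₀def, Real.sqrt_mul h1δ.le, mul_pow]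
    rw [h8]
    calc (1+δ) * ((Real.sqrt (1+δ))^(n-2) * (Real.sqrt r)^(n-2))
        = (1+δ) * (Real.sqrt (1+δ))^(n-2) * (r^e)^n := by rw [h7]; ring
      _ ≤ s^n := by rw [← h6]; exact h5
  linarith

lemma gm_mono (n : ℕ) (hn : 3 ≤ n) (δ c : ℝ)
    (hkey : ∀ t : ℝ, 0 ≤ t → (n:ℝ)*(1+δ)*t^(n-2) - ((n:ℝ)+2)*t^n ≤ 2*c) :
    MonotoneOn (fun t : ℝ => t^(n+2) - (1+δ)*t^n + c*t^2 - δ*c) (Set.Ici 0) := by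
  set f : ℝ → ℝ := fun t => t^(n+2) - (1+δ)*t^n + c*t^2 - δ*c with hfdef
  have hder : ∀ x : ℝ, HasDerivAt f
      (((n:ℝ)+2)*x^(n+1) - (1+δ)*((n:ℝ)*x^(n-1)) + c*(2*x) - 0) x := by
    intro x
    have h1 := hasDerivAt_pow (n+2) x
    have h2 := (hasDerivAt_pow n x).const_mul (1+δ)
    have h3 := (hasDerivAt_pow 2 x).const_mul c
    have h4 : HasDerivAt (fun _ : ℝ => δ*c) 0 x := hasDerivAt_const x _
    rw [(by omega : n+2-1 = n+1)] at h1
    have := ((h1.sub h2).add h3).sub h4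
    push_cast at this ⊢
    refine this.congr_deriv ?_; norm_num
  apply monotoneOn_of_deriv_nonneg (convex_Ici _)
  · fun_prop
  · intro x _
    exact (hder x).differentiableAt.differentiableWithinAt
  · intro x hx
    rw [interior_Ici] at hx
    rw [(hder x).deriv]
    have hx0 : (0:ℝ) < x := hx
    have hk := hkey x hx0.le
    have hmul := mul_le_mul_of_nonneg_right hk hx0.le
    have e1 : x^(n-1) = x^(n-2)*x := by rw [← pow_succ]; congr 1; omega
    have e2 : x^(n+1) = x^n*x := by rw [← pow_succ]
    rw [e1, e2]
    nlinarith [hmul]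

lemma gm_unique_root (n : ℕ) (hn : 3 ≤ n) (δ c : ℝ) (hδ : 0 < δ) (hc : 0 < c)
    (hmono : MonotoneOn (fun t : ℝ => t^(n+2) - (1+δ)*t^n + c*t^2 - δ*c) (Set.Ici 0))
    (t t' : ℝ) (ht : 0 < t) (ht' : 0 < t')
    (e1 : t^(n+2) - (1+δ)*t^n + c*t^2 - δ*c = 0)
    (e2 : t'^(n+2) - (1+δ)*t'^n + c*t'^2 - δ*c = 0) : t = t' := by
  by_contra hne
  wlog htt : t < t' generalizing t t'
  · exact this t' t ht' ht e2 e1 (Ne.symm hne) ((not_lt.1 htt).lt_of_ne (Ne.symm hne))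
  set f : ℝ → ℝ := fun t => t^(n+2) - (1+δ)*t^n + c*t^2 - δ*c with hfdef
  have hzero : ∀ x ∈ Set.Icc t t', f x = 0 := by
    intro x hx
    have h1 : f t ≤ f x := hmono (by simp [Set.mem_Ici]; linarith) (by simp [Set.mem_Ici]; linarith [hx.1]) hx.1
    have h2 : f x ≤ f t' := hmono (by simp [Set.mem_Ici]; linarith [hx.1]) (by simp [Set.mem_Ici]; linarith) hx.2
    simp only [hfdef] at h1 h2
    rw [e1] at h1; rw [e2] at h2
    exact le_antisymm h2 h1
  set P : Polynomial ℝ := Polynomial.X^(n+2) - Polynomial.C (1+δ) * Polynomial.X^n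
      + Polynomial.C c * Polynomial.X^2 - Polynomial.C (δ*c) with hPdef
  have hP0 : P ≠ 0 := by
    intro h
    have hco : P.coeff (n+2) = 1 := by
      simp only [hPdef, Polynomial.coeff_add, Polynomial.coeff_sub,
        Polynomial.coeff_X_pow, Polynomial.coeff_C_mul, Polynomial.coeff_C]
      rw [if_pos trivial, if_neg (by omega : ¬(n+2=n)), if_neg (by omega : ¬(n+2=2)),
        if_neg (by omega : ¬(n+2=0))]
      ring
    rw [h] at hco
    simp at hco
  have hfin : {x : ℝ | P.IsRoot x}.Finite := Polynomial.finite_setOf_isRoot hP0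
  have hsub : Set.Icc t t' ⊆ {x : ℝ | P.IsRoot x} := by
    intro x hx
    have := hzero x hx
    simp only [Set.mem_setOf_eq, Polynomial.IsRoot, hPdef]
    simp only [Polynomial.eval_add, Polynomial.eval_sub, Polynomial.eval_mul,
      Polynomial.eval_pow, Polynomial.eval_C, Polynomial.eval_X]
    simpa [hfdef] using this
  exact (Set.Icc_infinite htt) (hfin.subset hsub)


lemma pow_eq_of_pow_eq_pow {a b : ℝ} (n : ℕ) (hn : 0 < n) (ha : 0 ≤ a) (hb : 0 ≤ b)
    (h : a^n = b^n) : a = b := by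
  rcases lt_trichotomy a b with hlt | he | hgt
  · exact absurd h (ne_of_lt (pow_lt_pow_left₀ hlt ha hn.ne'))
  · exact he
  · exact absurd h.symm (ne_of_lt (pow_lt_pow_left₀ hgt hb hn.ne'))

lemma nth_root_set_card (n : ℕ) (hn : 0 < n) (z : ℂ) (hz : z ≠ 0) :
    {w : ℂ | w^n = z}.Finite ∧ {w : ℂ | w^n = z}.ncard = n := by
  obtain ⟨w₀, hw₀⟩ : ∃ w₀ : ℂ, w₀^n = z := by
    refine ⟨Complex.exp (Complex.log z / n), ?_⟩
    rw [← Complex.exp_nat_mul, mul_div_cancel₀ _ (by exact_mod_cast hn.ne'), Complex.exp_log hz]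
  have hw₀0 : w₀ ≠ 0 := fun h => hz (by rw [← hw₀, h, zero_pow hn.ne'])
  have hset : {w : ℂ | w^n = z} = (fun x => x * w₀) '' ((Polynomial.nthRootsFinset n (1:ℂ) : Finset ℂ) : Set ℂ) := by
    ext w
    simp only [Set.mem_setOf_eq, Set.mem_image, Finset.mem_coe,
      Polynomial.mem_nthRootsFinset hn]
    constructor
    · intro h
      refine ⟨w / w₀, ?_, div_mul_cancel₀ w hw₀0⟩
      rw [div_pow, h, ← hw₀, div_self (pow_ne_zero n hw₀0)]
    · rintro ⟨x, hx, rfl⟩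
      rw [mul_pow, hx, one_mul, hw₀]
  constructor
  · rw [hset]; exact ((Polynomial.nthRootsFinset n (1:ℂ)).finite_toSet).image _
  · rw [hset, Set.ncard_image_of_injective _ (mul_left_injective₀ hw₀0),
      Set.ncard_coe_finset, (Complex.isPrimitiveRoot_exp n hn.ne').card_nthRootsFinset]

-- equation normal form
lemma eq_normal_form (n : ℕ) (hn : 3 ≤ n) (δ : ℝ) (S w : ℂ) (hw : w ≠ 0) (hwS : w^n ≠ S) :
    (w ^ (n - 1) / (w ^ n - S) + (δ : ℂ) / w = (starRingEnd ℂ) w)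
    ↔ (starRingEnd ℂ) w * w * (w^n - S) = w^n + δ*(w^n - S) := by
  have hden : w^n - S ≠ 0 := sub_ne_zero.2 hwS
  have hpow : w^(n-1) * w = w^n := by rw [← pow_succ]; congr 1; omega
  rw [div_add_div _ _ hden hw, div_eq_iff (mul_ne_zero hden hw)]
  constructor
  · intro h; linear_combination -h + hpow
  · intro h; linear_combination -h + hpow

end Lemmas

set_option maxHeartbeats 1000000 in
/-- For `n ≥ 3`, `δ > 0` and `s ≥ √(1+δ)·((n−2)/(n+2))^((n−2)/(2n))`, the equation
`w^(n−1)/(w^n − s^n) + δ/w = conj w` has exactly `3n` solutions. -/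
theorem stmt_19 (n : ℕ) (hn : 3 ≤ n) (δ s : ℝ) (hδ : 0 < δ)
    (hs : s ≥ Real.sqrt (1 + δ) *
      (((n : ℝ) - 2) / ((n : ℝ) + 2)) ^ ((((n : ℝ) - 2)) / (2 * (n : ℝ)))) :
    {w : ℂ | w ≠ 0 ∧ w ^ n ≠ (s : ℂ) ^ n ∧
      w ^ (n - 1) / (w ^ n - (s : ℂ) ^ n) + (δ : ℂ) / w =
        (starRingEnd ℂ) w}.ncard = 3 * n := by
  have hn0 : 0 < n := by omega
  have hn3 : (3:ℝ) ≤ (n:ℝ) := by exact_mod_cast hn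
  have h1δ : (0:ℝ) < 1+δ := by linarith
  have hbase : 0 < ((n:ℝ)-2)/((n:ℝ)+2) := div_pos (by linarith) (by linarith)
  have hs0 : 0 < s := lt_of_lt_of_le
    (mul_pos (Real.sqrt_pos.2 h1δ) (Real.rpow_pos_of_pos hbase _)) hs
  have hc : 0 < s^n := pow_pos hs0 n
  set c : ℝ := s^n with hcdef
  have hkey : ∀ t : ℝ, 0 ≤ t → (n:ℝ)*(1+δ)*t^(n-2) - ((n:ℝ)+2)*t^n ≤ 2*c := by
    intro t ht; exact threshold n hn δ s hδ hs t ht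
  have hmono := gm_mono n hn δ c hkey
  -- the two real polynomials
  set gp : ℝ → ℝ := fun t => t^(n+2) - (1+δ)*t^n - c*t^2 + δ*c with hgpdef
  set gm : ℝ → ℝ := fun t => t^(n+2) - (1+δ)*t^n + c*t^2 - δ*c with hgmdef
  have hgpf : ∀ t : ℝ, gp t = t^n*(t^2-1-δ) - c*(t^2-δ) := by
    intro t; simp only [hgpdef]; rw [pow_add]; ring
  have hgmf : ∀ t : ℝ, gm t = t^n*(t^2-1-δ) + c*(t^2-δ) := by
    intro t; simp only [hgmdef]; rw [pow_add]; ring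
  have hgp_cont : Continuous gp := by simp only [hgpdef]; fun_prop
  have hgm_cont : Continuous gm := by simp only [hgmdef]; fun_prop
  -- sqrt endpoints
  set a : ℝ := Real.sqrt δ with hadef
  set b : ℝ := Real.sqrt (1+δ) with hbdef
  have hapos : 0 < a := Real.sqrt_pos.2 hδ
  have hbpos : 0 < b := Real.sqrt_pos.2 h1δ
  have ha2 : a^2 = δ := Real.sq_sqrt hδ.le
  have hb2 : b^2 = 1+δ := Real.sq_sqrt h1δ.le
  have hab : a < b := by nlinarith [sq_nonneg (a+b)]
  -- root t₁ ∈ (0, a)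
  have hgp0 : gp 0 = δ*c := by
    simp only [hgpdef]; rw [zero_pow (by omega : n+2 ≠ 0), zero_pow hn0.ne']; ring
  have hgpa : gp a = -a^n := by rw [hgpf, ha2]; ring
  obtain ⟨t₁, ht₁mem, ht₁⟩ : ∃ t₁ ∈ Set.Ioo (0:ℝ) a, gp t₁ = 0 := by
    have := intermediate_value_Ioo' hapos.le hgp_cont.continuousOn
      (show (0:ℝ) ∈ Set.Ioo (gp a) (gp 0) by
        constructor
        · rw [hgpa]; simp; positivity
        · rw [hgp0]; positivity)
    obtain ⟨t₁, h1, h2⟩ := this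
    exact ⟨t₁, h1, h2⟩
  -- root t₂ ∈ (b, M)
  set M : ℝ := 2*s + 2 + δ with hMdef
  have hMpos : 0 < M := by positivity
  have hM2s : 2*s ≤ M := by simp only [hMdef]; linarith
  have hM1 : 2+δ ≤ M := by simp only [hMdef]; linarith
  have h2c : 2*c ≤ M^n := by
    have h1 : (2*s)^n ≤ M^n := pow_le_pow_left₀ (by positivity) hM2s n
    have h2 : (2:ℝ) ≤ 2^n := le_self_pow₀ one_le_two hn0.ne'
    have h3 : (2:ℝ)*c ≤ 2^n*c := mul_le_mul_of_nonneg_right h2 hc.le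
    rw [mul_pow] at h1
    rw [hcdef] at h3 ⊢
    linarith
  have hMM : 2+δ < M^2 := by
    nlinarith [mul_le_mul hM1 hM1 (by linarith : (0:ℝ) ≤ 2+δ) (by linarith : (0:ℝ) ≤ M)]
  have hgpM : 0 < gp M := by
    rw [hgpf]
    have h1 : (0:ℝ) < M^2 - 1 - δ := by linarith
    have h4 : c*(M^2-2-δ) = 2*c*(M^2-1-δ) - c*(M^2-δ) := by ring
    have h5 := mul_le_mul_of_nonneg_right h2c h1.le
    have h6 : (0:ℝ) < M^2-2-δ := by linarith
    nlinarith [mul_pos hc h6]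
  have hbM : b < M := by nlinarith [sq_nonneg (M+b), hb2]
  have hgpb : gp b = -c := by rw [hgpf, hb2]; ring
  obtain ⟨t₂, ht₂mem, ht₂⟩ : ∃ t₂ ∈ Set.Ioo b M, gp t₂ = 0 := by
    have := intermediate_value_Ioo hbM.le hgp_cont.continuousOn
      (show (0:ℝ) ∈ Set.Ioo (gp b) (gp M) by
        constructor
        · rw [hgpb]; linarith
        · exact hgpM)
    obtain ⟨t₂, h1, h2⟩ := this
    exact ⟨t₂, h1, h2⟩
  -- root t₃ ∈ (a, b)
  have hgma : gm a = -a^n := by rw [hgmf, ha2]; ring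
  have hgmb : gm b = c := by rw [hgmf, hb2]; ring
  obtain ⟨t₃, ht₃mem, ht₃⟩ : ∃ t₃ ∈ Set.Ioo a b, gm t₃ = 0 := by
    have := intermediate_value_Ioo hab.le hgm_cont.continuousOn
      (show (0:ℝ) ∈ Set.Ioo (gm a) (gm b) by
        constructor
        · rw [hgma]; simp; positivity
        · rw [hgmb]; exact hc)
    obtain ⟨t₃, h1, h2⟩ := this
    exact ⟨t₃, h1, h2⟩
  have ht₁pos : 0 < t₁ := ht₁mem.1
  have ht₃pos : 0 < t₃ := hapos.trans ht₃mem.1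
  have ht₂pos : 0 < t₂ := hbpos.trans ht₂mem.1
  have ht₁sq : t₁^2 < δ := by nlinarith [ht₁mem.2, ht₁mem.1, ha2]
  have ht₂sq : 1+δ < t₂^2 := by nlinarith [ht₂mem.1, hb2, hbpos]
  have ht₁₂ : t₁ < t₂ := by linarith [ht₁mem.2, ht₂mem.1]
  have ht₁₃ : t₁ < t₃ := ht₁mem.2.trans ht₃mem.1
  have ht₃₂ : t₃ < t₂ := ht₃mem.2.trans ht₂mem.1
  -- root classification for gp
  have gp_root_eq : ∀ t : ℝ, 0 < t → gp t = 0 → t = t₁ ∨ t = t₂ := by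
    intro t ht hroot
    have he : t^n*(t^2-1-δ) = c*(t^2-δ) := by
      have h0 : t^n*(t^2-1-δ) - c*(t^2-δ) = 0 := by rw [← hgpf]; exact hroot
      linarith
    have e₁ : t₁^n*(t₁^2-1-δ) = c*(t₁^2-δ) := by
      have h0 : t₁^n*(t₁^2-1-δ) - c*(t₁^2-δ) = 0 := by rw [← hgpf]; exact ht₁
      linarith
    have e₂ : t₂^n*(t₂^2-1-δ) = c*(t₂^2-δ) := by
      have h0 : t₂^n*(t₂^2-1-δ) - c*(t₂^2-δ) = 0 := by rw [← hgpf]; exact ht₂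
      linarith
    rcases lt_or_ge (t^2) δ with hlow | hge
    · left
      by_contra hne
      rcases lt_or_gt_of_ne hne with hlt | hgt
      · exact gp_unique_low n hn δ c hδ hc t t₁ ht hlt ht₁sq he e₁
      · exact gp_unique_low n hn δ c hδ hc t₁ t ht₁pos hgt hlow e₁ he
    rcases le_or_gt (t^2) (1+δ) with hmid | hhigh
    · exfalso
      have := gp_neg_mid n δ c hδ hc t ht hge hmid
      rw [← hgpf, hroot] at this
      exact lt_irrefl 0 this
    · right
      by_contra hne
      rcases lt_or_gt_of_ne hne with hlt | hgt
      · exact gp_unique_high n hn δ c hδ hc t t₂ ht hlt hhigh he e₂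
      · exact gp_unique_high n hn δ c hδ hc t₂ t ht₂pos hgt ht₂sq e₂ he
  have gm_root_eq : ∀ t : ℝ, 0 < t → gm t = 0 → t = t₃ :=
    fun t ht hroot => gm_unique_root n hn δ c hδ hc hmono t t₃ ht ht₃pos hroot ht₃
  -- gp s ≠ 0
  have hgps : gp s = -c := by rw [hgpf, hcdef]; ring
  -- complex solution sets
  set A : Set ℂ := {w : ℂ | w^n = ((t₁:ℝ):ℂ)^n} with hAdef
  set B : Set ℂ := {w : ℂ | w^n = ((t₂:ℝ):ℂ)^n} with hBdef
  set C : Set ℂ := {w : ℂ | w^n = -((t₃:ℝ):ℂ)^n} with hCdef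
  set T : Set ℂ := {w : ℂ | w ≠ 0 ∧ w ^ n ≠ (s : ℂ) ^ n ∧
      w ^ (n - 1) / (w ^ n - (s : ℂ) ^ n) + (δ : ℂ) / w = (starRingEnd ℂ) w} with hTdef
  -- membership: plus roots
  have plus_mem : ∀ t : ℝ, 0 < t → gp t = 0 → ∀ w : ℂ, w^n = ((t:ℝ):ℂ)^n → w ∈ T := by
    intro t ht hroot w hw
    have hts : t ≠ s := by
      intro h; rw [h, hgps] at hroot; exact hc.ne' (by linarith)
    have hw0 : w ≠ 0 := by
      intro h
      rw [h, zero_pow hn0.ne'] at hw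
      exact (pow_ne_zero n (ofReal_ne_zero.2 ht.ne')) hw.symm
    have hwS : w^n ≠ (s:ℂ)^n := by
      intro h
      rw [hw] at h
      have h2 : ((t^n : ℝ):ℂ) = ((s^n : ℝ):ℂ) := by push_cast; exact h
      have h3 : t^n = s^n := ofReal_inj.1 h2
      exact hts (pow_eq_of_pow_eq_pow n hn0 ht.le hs0.le h3)
    have habs : ‖w‖ = t := by
      have h1 : ‖w‖ ^ n = t^n := by
        rw [← norm_pow, hw, norm_pow, Complex.norm_real, Real.norm_eq_abs, abs_of_pos ht]
      exact pow_eq_of_pow_eq_pow n hn0 (norm_nonneg w) ht.le h1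
    have hcw : (starRingEnd ℂ) w * w = ((t : ℝ) : ℂ)^2 := by
      rw [mul_comm, Complex.mul_conj, Complex.normSq_eq_norm_sq]
      push_cast
      rw [habs]
    refine ⟨hw0, hwS, ?_⟩
    rw [eq_normal_form n hn δ _ w hw0 hwS, hcw, hw]
    have hfac : t^n*(t^2-1-δ) - s^n*(t^2-δ) = 0 := by rw [← hcdef, ← hgpf]; exact hroot
    have hreal : t^2*(t^n - s^n) = t^n + δ*(t^n - s^n) := by linear_combination hfac
    have hrealC := congrArg (fun x : ℝ => (x:ℂ)) hreal
    push_cast at hrealC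
    linear_combination hrealC
  have minus_mem : ∀ w : ℂ, w^n = -((t₃:ℝ):ℂ)^n → w ∈ T := by
    intro w hw
    have hw0 : w ≠ 0 := by
      intro h
      rw [h, zero_pow hn0.ne'] at hw
      have h2 : ((t₃:ℝ):ℂ)^n = 0 := neg_eq_zero.1 hw.symm
      exact (pow_ne_zero n (ofReal_ne_zero.2 ht₃pos.ne')) h2
    have hwS : w^n ≠ (s:ℂ)^n := by
      intro h
      rw [hw] at h
      have h2 : ((-(t₃^n) : ℝ):ℂ) = ((s^n : ℝ):ℂ) := by push_cast; linear_combination h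
      have h3 : -(t₃^n) = s^n := ofReal_inj.1 h2
      nlinarith [pow_pos ht₃pos n, pow_pos hs0 n]
    have habs : ‖w‖ = t₃ := by
      have h1 : ‖w‖ ^ n = t₃^n := by
        rw [← norm_pow, hw, norm_neg, norm_pow, Complex.norm_real, Real.norm_eq_abs, abs_of_pos ht₃pos]
      exact pow_eq_of_pow_eq_pow n hn0 (norm_nonneg w) ht₃pos.le h1
    have hcw : (starRingEnd ℂ) w * w = ((t₃ : ℝ) : ℂ)^2 := by
      rw [mul_comm, Complex.mul_conj, Complex.normSq_eq_norm_sq]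
      push_cast
      rw [habs]
    refine ⟨hw0, hwS, ?_⟩
    rw [eq_normal_form n hn δ _ w hw0 hwS, hcw, hw]
    have hfac : t₃^n*(t₃^2-1-δ) + s^n*(t₃^2-δ) = 0 := by rw [← hcdef, ← hgmf]; exact ht₃
    have hreal : t₃^2*(-(t₃^n) - s^n) = -(t₃^n) + δ*(-(t₃^n) - s^n) := by
      linear_combination -hfac
    have hrealC := congrArg (fun x : ℝ => (x:ℂ)) hreal
    push_cast at hrealC
    linear_combination hrealC
  -- forward inclusion
  have hTsub : T ⊆ A ∪ B ∪ C := by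
    rintro w ⟨hw0, hwS, heq⟩
    rw [eq_normal_form n hn δ _ w hw0 hwS] at heq
    set t : ℝ := ‖w‖ with htdef
    have ht : 0 < t := norm_pos_iff.mpr hw0
    have hcw : (starRingEnd ℂ) w * w = ((t : ℝ) : ℂ)^2 := by
      rw [mul_comm, Complex.mul_conj, Complex.normSq_eq_norm_sq]
      push_cast
      norm_num
      rfl
    rw [hcw] at heq
    have E2 : (((t:ℝ):ℂ)^2 - 1 - (δ:ℂ)) * w^n = (((t:ℝ):ℂ)^2 - (δ:ℂ)) * (s:ℂ)^n := by
      linear_combination heq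
    have hne : (t^2 - 1 - δ : ℝ) ≠ 0 := by
      intro h
      have h1 : (t^2 - δ : ℝ) = 1 := by linarith
      have hl : (((t:ℝ):ℂ)^2 - 1 - (δ:ℂ)) = 0 := by
        have := congrArg (fun x : ℝ => (x:ℂ)) h
        push_cast at this
        linear_combination this
      have h2 : (((t:ℝ):ℂ)^2 - (δ:ℂ)) * (s:ℂ)^n ≠ 0 := by
        apply mul_ne_zero _ (pow_ne_zero _ (ofReal_ne_zero.2 hs0.ne'))
        have := congrArg (fun x : ℝ => (x:ℂ)) h1
        push_cast at this
        rw [show (((t:ℝ):ℂ)^2 - (δ:ℂ)) = 1 by linear_combination this]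
        norm_num
      apply h2
      rw [← E2, hl, zero_mul]
    have hneC : (((t:ℝ):ℂ)^2 - 1 - (δ:ℂ)) ≠ 0 := by
      intro h
      apply hne
      exact_mod_cast h
    set R : ℝ := (t^2-δ)*s^n/(t^2-1-δ) with hRdef
    have hRid : (t^2-1-δ)*R = (t^2-δ)*s^n := by
      rw [hRdef]; field_simp
    have hwn : w^n = ((R:ℝ):ℂ) := by
      apply mul_left_cancel₀ hneC
      rw [E2]
      have := congrArg (fun x : ℝ => (x:ℂ)) hRid
      push_cast at this
      linear_combination -this
    have habsR : t^n = |R| := by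
      have h1 := congrArg (‖·‖) hwn
      rw [norm_pow, Complex.norm_real, Real.norm_eq_abs] at h1
      exact h1
    have hR0 : R ≠ 0 := by
      intro h
      rw [h] at hwn
      simp only [ofReal_zero] at hwn
      exact hw0 (pow_eq_zero_iff hn0.ne' |>.1 hwn)
    rcases hR0.lt_or_gt with hRneg | hRpos
    · -- gm root
      have hRe : R = -(t^n) := by rw [habsR, abs_of_neg hRneg]; ring
      have hgm0 : gm t = 0 := by
        rw [hgmf]
        rw [hRe] at hRid
        linear_combination -hRid
      have ht3 : t = t₃ := gm_root_eq t ht hgm0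
      right
      show w ∈ C
      rw [hCdef, Set.mem_setOf_eq, ← ht3, hwn, hRe]
      push_cast; ring
    · -- gp root
      have hRe : R = t^n := by rw [habsR, abs_of_pos hRpos]
      have hgp0 : gp t = 0 := by
        rw [hgpf]
        rw [hRe] at hRid
        linear_combination hRid
      rcases gp_root_eq t ht hgp0 with h1 | h2
      · left; left
        show w ∈ A
        rw [hAdef, Set.mem_setOf_eq, ← h1, hwn, hRe]
        push_cast; ring
      · left; right
        show w ∈ B
        rw [hBdef, Set.mem_setOf_eq, ← h2, hwn, hRe]
        push_cast; ring
  -- set equality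
  have hTeq : T = A ∪ B ∪ C := by
    apply Set.Subset.antisymm hTsub
    rintro w ((hw | hw) | hw)
    · exact plus_mem t₁ ht₁pos ht₁ w hw
    · exact plus_mem t₂ ht₂pos ht₂ w hw
    · exact minus_mem w hw
  -- cardinalities
  have hAcard := nth_root_set_card n hn0 (((t₁:ℝ):ℂ)^n)
    (pow_ne_zero n (ofReal_ne_zero.2 ht₁pos.ne'))
  have hBcard := nth_root_set_card n hn0 (((t₂:ℝ):ℂ)^n)
    (pow_ne_zero n (ofReal_ne_zero.2 ht₂pos.ne'))
  have hCcard := nth_root_set_card n hn0 (-((t₃:ℝ):ℂ)^n)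
    (neg_ne_zero.2 (pow_ne_zero n (ofReal_ne_zero.2 ht₃pos.ne')))
  -- disjointness
  have hreal_ne : ∀ x y : ℝ, 0 < x → 0 < y → x < y → ((x:ℝ):ℂ)^n ≠ ((y:ℝ):ℂ)^n := by
    intro x y hx hy hxy h
    have h2 : ((x^n : ℝ):ℂ) = ((y^n : ℝ):ℂ) := by push_cast; exact h
    have h3 : x^n = y^n := ofReal_inj.1 h2
    exact (pow_lt_pow_left₀ hxy hx.le hn0.ne').ne h3
  have hposneg : ∀ x y : ℝ, 0 < x → 0 < y → ((x:ℝ):ℂ)^n ≠ -((y:ℝ):ℂ)^n := by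
    intro x y hx hy h
    have h2 : ((x^n : ℝ):ℂ) = ((-(y^n) : ℝ):ℂ) := by push_cast; linear_combination h
    have h3 : x^n = -(y^n) := ofReal_inj.1 h2
    nlinarith [pow_pos hx n, pow_pos hy n]
  have hAB : Disjoint A B := by
    rw [Set.disjoint_left]
    intro w hwA hwB
    exact hreal_ne t₁ t₂ ht₁pos ht₂pos ht₁₂ (hwA.symm.trans hwB)
  have hAC : Disjoint A C := by
    rw [Set.disjoint_left]
    intro w hwA hwC
    exact hposneg t₁ t₃ ht₁pos ht₃pos (hwA.symm.trans hwC)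
  have hBC : Disjoint B C := by
    rw [Set.disjoint_left]
    intro w hwB hwC
    exact hposneg t₂ t₃ ht₂pos ht₃pos (hwB.symm.trans hwC)
  rw [hTeq, Set.ncard_union_eq (Set.disjoint_union_left.2 ⟨hAC, hBC⟩)
      (hAcard.1.union hBcard.1) hCcard.1,
    Set.ncard_union_eq hAB hAcard.1 hBcard.1, hAcard.2, hBcard.2, hCcard.2]
  ring
end
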